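/- arXiv:2010.12215 — 2 statements merged into one kernel-verified Lean document; each statement's English description precedes it below -/
import Mathlib

section
/- Given a conditional expectation preserving system (E, T, S, e) that is weakly mixing (i.e., for all band projections P, Q on E, (1/n) ∑_{k=0}^{n-1} |T((S^k P)Qe) − TPe · TQe| → 0 in order), it follows that for all f, g ∈ E_e, (1/n) ∑_{k=0}^{n-1} |T((S^k f) · g) − Tf · Tg| → 0 in order as n → ∞. -/
open Filter Finset

/-- Order convergence of a sequence in a Riesz space. -/
def OrderConvergesTo {E : Type*} [Lattice E] [AddCommGroup E] (x : ℕ → E) (l : E) : Prop :=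
  ∃ y : ℕ → E, Antitone y ∧ IsGLB (Set.range y) (0 : E) ∧ ∀ n, |x n - l| ≤ y n

/-- A band (order) projection: a linear idempotent `P` with `0 ≤ P f ≤ f` for `f ≥ 0`. -/
def IsBandProjection {E : Type*} [Lattice E] [AddCommGroup E] [Module ℝ E]
    (P : Module.End ℝ E) : Prop :=
  P * P = P ∧ ∀ f : E, 0 ≤ f → 0 ≤ P f ∧ P f ≤ f

/-- `e` is a weak order unit. -/
def IsWeakOrderUnit {E : Type*} [Lattice E] [AddCommGroup E] (e : E) : Prop :=
  0 < e ∧ ∀ f : E, 0 ≤ f → f ⊓ e = 0 → f = 0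

/-- A conditional expectation operator: a positive, order continuous projection whose
range is a Dedekind complete Riesz subspace, mapping weak order units to weak order
units. -/
structure IsConditionalExpectation {E : Type*} [Lattice E] [AddCommGroup E] [Module ℝ E]
    (T : Module.End ℝ E) : Prop where
  positive : ∀ f : E, 0 ≤ f → 0 ≤ T f
  idem : T * T = T
  orderContinuous : ∀ A : Set E, A.Nonempty → DirectedOn (· ≤ ·) A →
    ∀ l : E, IsLUB A l → IsLUB (T '' A) (T l)
  rangeSublattice : ∀ f g : E, T (T f ⊔ T g) = T f ⊔ T g
  rangeDedekindComplete : ∀ A ⊆ Set.range T, A.Nonempty → BddAbove A →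
    ∃ l ∈ Set.range T, IsLUB A l
  mapsWeakUnits : ∀ e : E, IsWeakOrderUnit e → IsWeakOrderUnit (T e)

/-- An order continuous Riesz homomorphism. -/
structure IsOrderContRieszHom {E : Type*} [Lattice E] [AddCommGroup E] [Module ℝ E]
    (S : Module.End ℝ E) : Prop where
  latticeHom : ∀ f g : E, S (f ⊔ g) = S f ⊔ S g
  orderContinuous : ∀ A : Set E, A.Nonempty → DirectedOn (· ≤ ·) A →
    ∀ l : E, IsLUB A l → IsLUB (S '' A) (S l)


open Filter Finset

section WMHelpers
set_option linter.unusedSectionVars false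

variable {E : Type*} [ConditionallyCompleteLattice E] [AddCommGroup E]
  [CovariantClass E E (· + ·) (· ≤ ·)] [Module ℝ E] [PosSMulMono ℝ E]

private theorem wm_oacm' : ∀ (a b : E), a ≤ b → ∀ c : E, c + a ≤ c + b :=
  fun _ _ h c => add_le_add_right h c

local instance wm_oacm : IsOrderedAddMonoid E :=
  { add_le_add_left := fun _ _ h c => add_le_add_left h c }

theorem wm_abs_def (a : E) : |a| = a ⊔ -a := rfl

theorem wm_smul_le_smul_right {a b : ℝ} (h : a ≤ b) {u : E} (hu : 0 ≤ u) :
    a • u ≤ b • u := by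
  have h0 : (0:E) ≤ (b - a) • u := smul_nonneg (by linarith) hu
  calc a • u = a • u + 0 := (add_zero _).symm
    _ ≤ a • u + (b - a) • u := add_le_add_right h0 _
    _ = b • u := by rw [← add_smul]; ring_nf

theorem wm_smul_le_iff {c : ℝ} (hc : 0 < c) {x y : E} : c • x ≤ c • y ↔ x ≤ y := by
  constructor
  · intro h
    have := smul_le_smul_of_nonneg_left h (inv_nonneg.mpr hc.le)
    simpa [inv_smul_smul₀ hc.ne'] using this
  · intro h; exact smul_le_smul_of_nonneg_left h hc.le

theorem wm_smul_inf {c : ℝ} (hc : 0 < c) (x y : E) : c • (x ⊓ y) = c • x ⊓ c • y := by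
  apply le_antisymm
  · exact le_inf (smul_le_smul_of_nonneg_left inf_le_left hc.le)
      (smul_le_smul_of_nonneg_left inf_le_right hc.le)
  · have h1 : c⁻¹ • (c • x ⊓ c • y) ≤ x ⊓ y := by
      apply le_inf
      · have := smul_le_smul_of_nonneg_left (inf_le_left (a := c • x) (b := c • y))
          (inv_nonneg.mpr hc.le)
        simpa [inv_smul_smul₀ hc.ne'] using this
      · have := smul_le_smul_of_nonneg_left (inf_le_right (a := c • x) (b := c • y))
          (inv_nonneg.mpr hc.le)
        simpa [inv_smul_smul₀ hc.ne'] using this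
    have := smul_le_smul_of_nonneg_left h1 hc.le
    rwa [smul_inv_smul₀ hc.ne'] at this

theorem wm_smul_sup {c : ℝ} (hc : 0 < c) (x y : E) : c • (x ⊔ y) = c • x ⊔ c • y := by
  apply le_antisymm
  · have h1 : x ⊔ y ≤ c⁻¹ • (c • x ⊔ c • y) := by
      apply sup_le
      · have := smul_le_smul_of_nonneg_left (le_sup_left (a := c • x) (b := c • y))
          (inv_nonneg.mpr hc.le)
        simpa [inv_smul_smul₀ hc.ne'] using this
      · have := smul_le_smul_of_nonneg_left (le_sup_right (a := c • x) (b := c • y))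
          (inv_nonneg.mpr hc.le)
        simpa [inv_smul_smul₀ hc.ne'] using this
    have := smul_le_smul_of_nonneg_left h1 hc.le
    rwa [smul_inv_smul₀ hc.ne'] at this
  · exact sup_le (smul_le_smul_of_nonneg_left le_sup_left hc.le)
      (smul_le_smul_of_nonneg_left le_sup_right hc.le)

theorem wm_abs_smul_nonneg {c : ℝ} (hc : 0 ≤ c) (v : E) : |c • v| = c • |v| := by
  rcases hc.eq_or_lt with h | h
  · simp [← h]
  · rw [wm_abs_def (c • v), wm_abs_def v, ← smul_neg, ← wm_smul_sup h]

theorem wm_abs_smul (c : ℝ) (v : E) : |c • v| = |c| • |v| := by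
  rcases le_or_gt 0 c with hc | hc
  · rw [wm_abs_smul_nonneg hc, abs_of_nonneg hc]
  · have h1 : c • v = -((-c) • v) := by rw [neg_smul, neg_neg]
    rw [h1, abs_neg, wm_abs_smul_nonneg (by linarith : (0:ℝ) ≤ -c), abs_of_neg hc]

theorem wm_posPart_smul {c : ℝ} (hc : 0 ≤ c) (v : E) : (c • v)⁺ = c • v⁺ := by
  rcases hc.eq_or_lt with h | h
  · simp [← h]
  · rw [posPart_def, posPart_def, wm_smul_sup h, smul_zero]

theorem wm_negPart_smul {c : ℝ} (hc : 0 ≤ c) (v : E) : (c • v)⁻ = c • v⁻ := by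
  rw [← posPart_neg, ← posPart_neg, ← smul_neg, wm_posPart_smul hc]

theorem wm_isLUB_le_add {s : Set E} {a : E} (h : IsLUB s a) {c b : E}
    (hb : ∀ x ∈ s, x + c ≤ b) : a + c ≤ b := by
  have : a ≤ b - c := h.2 fun x hx => le_sub_iff_add_le.mpr (hb x hx)
  exact add_le_of_le_sub_right this

theorem wm_arch {e : E} (he : 0 ≤ e) {c : E} (hc : ∀ n : ℕ, c ≤ ((n : ℝ) + 1)⁻¹ • e) :
    c ≤ 0 := by
  set d := c⁺ with hd
  have hd0 : 0 ≤ d := posPart_nonneg c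
  have hdn : ∀ n : ℕ, ((n : ℝ) + 1) • d ≤ e := by
    intro n
    have h1 : c⁺ ≤ (((n : ℝ) + 1)⁻¹ • e)⁺ := posPart_mono (hc n)
    have h2 : (((n : ℝ) + 1)⁻¹ • e)⁺ = ((n : ℝ) + 1)⁻¹ • e :=
      posPart_eq_self.mpr (smul_nonneg (by positivity) he)
    have h3 : d ≤ ((n : ℝ) + 1)⁻¹ • e := h2 ▸ h1
    have h4 := smul_le_smul_of_nonneg_left h3 (by positivity : (0:ℝ) ≤ (n : ℝ) + 1)
    rwa [smul_inv_smul₀ (by positivity : ((n : ℝ) + 1) ≠ 0)] at h4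
  set s := sSup (Set.range fun n : ℕ => ((n : ℝ) + 1) • d) with hs
  have hbdd : BddAbove (Set.range fun n : ℕ => ((n : ℝ) + 1) • d) :=
    ⟨e, by rintro x ⟨n, rfl⟩; exact hdn n⟩
  have hlub : IsLUB (Set.range fun n : ℕ => ((n : ℝ) + 1) • d) s :=
    isLUB_csSup (Set.range_nonempty _) hbdd
  have key : ∀ n : ℕ, ((n : ℝ) + 1) • d ≤ s - d := by
    intro n
    have h1 : ((n : ℝ) + 1) • d + d ≤ s := by
      have : (((n + 1 : ℕ) : ℝ) + 1) • d ≤ s := hlub.1 ⟨n + 1, rfl⟩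
      have he2 : (((n + 1 : ℕ) : ℝ) + 1) • d = ((n : ℝ) + 1) • d + d := by
        push_cast
        rw [show ((n:ℝ) + 1 + 1) = ((n:ℝ) + 1) + 1 by ring, add_smul, one_smul]
      rwa [he2] at this
    exact le_sub_iff_add_le.mpr h1
  have : s ≤ s - d := hlub.2 (by rintro x ⟨n, rfl⟩; exact key n)
  have hd1 : d ≤ 0 := by
    have := sub_nonneg.mpr this
    simpa using this
  exact (le_posPart c).trans hd1

theorem wm_inf_add_le {a b c : E} (ha : 0 ≤ a) (hb : 0 ≤ b) (hc : 0 ≤ c) :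
    a ⊓ (b + c) ≤ a ⊓ b + a ⊓ c := by
  have hab : (0:E) ≤ a ⊓ b := le_inf ha hb
  have h2 : a ⊓ (b + c) ≤ a ⊓ b + c := by
    rw [← sub_le_iff_le_add]
    exact le_inf ((sub_le_self _ hc).trans inf_le_left) (sub_le_iff_le_add.mpr inf_le_right)
  have h3 : a ⊓ (b + c) ≤ a ⊓ b + a := inf_le_left.trans (le_add_of_nonneg_left hab)
  calc a ⊓ (b + c) ≤ (a ⊓ b + c) ⊓ (a ⊓ b + a) := le_inf h2 h3
    _ = a ⊓ b + c ⊓ a := (add_inf c a (a ⊓ b)).symm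
    _ = a ⊓ b + a ⊓ c := by rw [inf_comm c a]

end WMHelpers
section WMProj
set_option linter.unusedSectionVars false

variable {E : Type*} [ConditionallyCompleteLattice E] [AddCommGroup E]
  [CovariantClass E E (· + ·) (· ≤ ·)] [Module ℝ E] [PosSMulMono ℝ E]

/-- The sequence defining the band projection onto the band generated by `u`. -/
noncomputable def wmProjPos (u f : E) : E := ⨆ n : ℕ, f ⊓ (n : ℝ) • u

theorem wmProjPos_bdd (u f : E) : BddAbove (Set.range fun n : ℕ => f ⊓ (n : ℝ) • u) :=
  ⟨f, by rintro x ⟨n, rfl⟩; exact inf_le_left⟩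

theorem wmProjPos_le_self (u f : E) : wmProjPos u f ≤ f :=
  ciSup_le fun _ => inf_le_left

theorem le_wmProjPos (u f : E) (n : ℕ) : f ⊓ (n : ℝ) • u ≤ wmProjPos u f :=
  le_ciSup (wmProjPos_bdd u f) n

theorem wmProjPos_isLUB (u f : E) :
    IsLUB (Set.range fun n : ℕ => f ⊓ (n : ℝ) • u) (wmProjPos u f) :=
  isLUB_ciSup (wmProjPos_bdd u f)

theorem wmProjPos_nonneg {u f : E} (hf : 0 ≤ f) : 0 ≤ wmProjPos u f := by
  have h0 : f ⊓ ((0 : ℕ) : ℝ) • u = 0 := by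
    rw [Nat.cast_zero, zero_smul]; exact inf_eq_right.mpr hf
  calc (0 : E) = f ⊓ ((0 : ℕ) : ℝ) • u := h0.symm
    _ ≤ wmProjPos u f := le_wmProjPos u f 0

theorem wmProjPos_mono_f {u f g : E} (h : f ≤ g) : wmProjPos u f ≤ wmProjPos u g :=
  ciSup_le fun n => (inf_le_inf_right _ h).trans (le_wmProjPos u g n)

theorem wmProjPos_mono_u {u v : E} (h : u ≤ v) (f : E) : wmProjPos u f ≤ wmProjPos v f :=
  ciSup_le fun n =>
    (inf_le_inf_left _ (smul_le_smul_of_nonneg_left h (by positivity))).trans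
      (le_wmProjPos v f n)

theorem wmProjPos_of_zero {f : E} (hf : 0 ≤ f) : wmProjPos (0 : E) f = 0 := by
  apply le_antisymm
  · exact ciSup_le fun n => by rw [smul_zero]; exact inf_le_right
  · exact wmProjPos_nonneg hf

theorem wmProjPos_zero (u : E) : wmProjPos u (0 : E) = 0 := by
  apply le_antisymm (wmProjPos_le_self u 0) (wmProjPos_nonneg le_rfl)

theorem wmProjPos_self {u : E} (hu : 0 ≤ u) : wmProjPos u u = u := by
  apply le_antisymm (wmProjPos_le_self u u)
  have : u ⊓ ((1 : ℕ) : ℝ) • u = u := by rw [Nat.cast_one, one_smul, inf_idem]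
  calc u = u ⊓ ((1 : ℕ) : ℝ) • u := this.symm
    _ ≤ wmProjPos u u := le_wmProjPos u u 1

theorem wmProjPos_idem (u f : E) : wmProjPos u (wmProjPos u f) = wmProjPos u f := by
  apply le_antisymm
  · exact ciSup_le fun n => (inf_le_left).trans le_rfl
  · exact ciSup_le fun n =>
      (le_inf (le_wmProjPos u f n) inf_le_right).trans (le_wmProjPos u (wmProjPos u f) n)

theorem wmProjPos_disjoint {u w : E} (hu : 0 ≤ u) (hw : 0 ≤ w) (hd : w ⊓ u = 0) :
    wmProjPos u w = 0 := by
  have key : ∀ n : ℕ, w ⊓ (n : ℝ) • u = 0 := by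
    intro n
    induction n with
    | zero => rw [Nat.cast_zero, zero_smul]; exact inf_eq_right.mpr hw
    | succ n ih =>
      apply le_antisymm
      · have h1 : w ⊓ ((n + 1 : ℕ) : ℝ) • u ≤ w ⊓ (n : ℝ) • u + w ⊓ u := by
          have : ((n + 1 : ℕ) : ℝ) • u = (n : ℝ) • u + u := by
            push_cast; rw [add_smul, one_smul]
          rw [this]
          exact wm_inf_add_le hw (smul_nonneg (by positivity) hu) hu
        rw [ih, hd, add_zero] at h1; exact h1
      · exact le_inf hw (smul_nonneg (by positivity) hu)
  apply le_antisymm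
  · exact ciSup_le fun n => (key n).le
  · exact wmProjPos_nonneg hw

theorem wmProjPos_add {u x y : E} (hu : 0 ≤ u) (hx : 0 ≤ x) (hy : 0 ≤ y) :
    wmProjPos u (x + y) = wmProjPos u x + wmProjPos u y := by
  apply le_antisymm
  · apply ciSup_le
    intro n
    have hnu : (0 : E) ≤ (n : ℝ) • u := smul_nonneg (by positivity) hu
    have h1 : (x + y) ⊓ (n : ℝ) • u ≤ x ⊓ (n : ℝ) • u + y ⊓ (n : ℝ) • u := by
      have := wm_inf_add_le hnu hx hy
      rw [inf_comm ((n:ℝ) • u) (x + y)] at this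
      rw [inf_comm ((n:ℝ) • u) x, inf_comm ((n:ℝ) • u) y] at this
      exact this
    exact h1.trans (add_le_add (le_wmProjPos u x n) (le_wmProjPos u y n))
  · -- step 1 : for all n m, x ⊓ n•u + (y ⊓ m•u) ≤ wmProjPos u (x+y)
    have step1 : ∀ n m : ℕ, x ⊓ (n : ℝ) • u + y ⊓ (m : ℝ) • u ≤ wmProjPos u (x + y) := by
      intro n m
      have h1 : x ⊓ (n : ℝ) • u + y ⊓ (m : ℝ) • u ≤ (x + y) ⊓ ((n + m : ℕ) : ℝ) • u := by
        apply le_inf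
        · exact add_le_add inf_le_left inf_le_left
        · have : ((n + m : ℕ) : ℝ) • u = (n : ℝ) • u + (m : ℝ) • u := by
            push_cast; rw [add_smul]
          rw [this]; exact add_le_add inf_le_right inf_le_right
      exact h1.trans (le_wmProjPos u (x + y) (n + m))
    have step2 : ∀ m : ℕ, wmProjPos u x + y ⊓ (m : ℝ) • u ≤ wmProjPos u (x + y) := by
      intro m
      exact wm_isLUB_le_add (wmProjPos_isLUB u x)
        (by rintro _ ⟨n, rfl⟩; exact step1 n m)
    have step3 : wmProjPos u y + wmProjPos u x ≤ wmProjPos u (x + y) := by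
      apply wm_isLUB_le_add (wmProjPos_isLUB u y)
      rintro _ ⟨m, rfl⟩
      rw [add_comm]
      exact step2 m
    rwa [add_comm] at step3

theorem wmProjPos_smul_le {u : E} (hu : 0 ≤ u) {c : ℝ} (hc : 0 < c) (f : E) :
    wmProjPos u (c • f) ≤ c • wmProjPos u f := by
  apply ciSup_le
  intro n
  obtain ⟨m, hm⟩ := exists_nat_ge ((n : ℝ) / c)
  have hnm : (n : ℝ) ≤ c * m := by rw [div_le_iff₀ hc] at hm; linarith [hm]
  have h1 : (c • f) ⊓ (n : ℝ) • u ≤ (c • f) ⊓ (c * m) • u :=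
    inf_le_inf_left _ (wm_smul_le_smul_right hnm hu)
  have h2 : (c * (m : ℝ)) • u = c • ((m : ℝ) • u) := by rw [smul_smul]
  have h3 : (c • f) ⊓ (c • ((m : ℝ) • u)) = c • (f ⊓ (m : ℝ) • u) := (wm_smul_inf hc f _).symm
  calc (c • f) ⊓ (n : ℝ) • u ≤ (c • f) ⊓ (c * m) • u := h1
    _ = c • (f ⊓ (m : ℝ) • u) := by rw [h2, h3]
    _ ≤ c • wmProjPos u f := smul_le_smul_of_nonneg_left (le_wmProjPos u f m) hc.le

theorem wmProjPos_smul {u : E} (hu : 0 ≤ u) {c : ℝ} (hc : 0 < c) (f : E) :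
    wmProjPos u (c • f) = c • wmProjPos u f := by
  apply le_antisymm (wmProjPos_smul_le hu hc f)
  have h1 := wmProjPos_smul_le hu (inv_pos.mpr hc) (c • f)
  rw [inv_smul_smul₀ hc.ne'] at h1
  have h2 := smul_le_smul_of_nonneg_left h1 hc.le
  rwa [smul_inv_smul₀ hc.ne'] at h2

/-- The band projection onto the band generated by `u ≥ 0`, as a linear map. -/
noncomputable def wmProjL (u : E) (hu : 0 ≤ u) : Module.End ℝ E where
  toFun f := wmProjPos u f⁺ - wmProjPos u f⁻
  map_add' f g := by
    show wmProjPos u (f + g)⁺ - wmProjPos u (f + g)⁻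
      = wmProjPos u f⁺ - wmProjPos u f⁻ + (wmProjPos u g⁺ - wmProjPos u g⁻)
    set A := (f + g)⁺; set B := (f + g)⁻
    have h1 : A - B = f⁺ - f⁻ + (g⁺ - g⁻) := by
      rw [posPart_sub_negPart, posPart_sub_negPart, posPart_sub_negPart]
    have h : A + f⁻ + g⁻ = B + f⁺ + g⁺ := by
      rw [sub_eq_iff_eq_add.mp h1]; abel
    have h2 : wmProjPos u A + wmProjPos u f⁻ + wmProjPos u g⁻
        = wmProjPos u B + wmProjPos u f⁺ + wmProjPos u g⁺ := by
      have l1 : wmProjPos u (A + f⁻ + g⁻)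
          = wmProjPos u A + wmProjPos u f⁻ + wmProjPos u g⁻ := by
        rw [wmProjPos_add hu (add_nonneg (posPart_nonneg _) (negPart_nonneg _)) (negPart_nonneg _),
          wmProjPos_add hu (posPart_nonneg _) (negPart_nonneg _)]
      have l2 : wmProjPos u (B + f⁺ + g⁺)
          = wmProjPos u B + wmProjPos u f⁺ + wmProjPos u g⁺ := by
        rw [wmProjPos_add hu (add_nonneg (negPart_nonneg _) (posPart_nonneg _)) (posPart_nonneg _),
          wmProjPos_add hu (negPart_nonneg _) (posPart_nonneg _)]
      rw [← l1, ← l2, h]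
    have h3 : wmProjPos u A = wmProjPos u B + wmProjPos u f⁺ + wmProjPos u g⁺
        - (wmProjPos u f⁻ + wmProjPos u g⁻) := by rw [← h2]; abel
    rw [h3]; abel
  map_smul' c f := by
    simp only [RingHom.id_apply]
    show wmProjPos u (c • f)⁺ - wmProjPos u (c • f)⁻
      = c • (wmProjPos u f⁺ - wmProjPos u f⁻)
    rcases le_or_gt 0 c with hc | hc
    · rcases hc.eq_or_lt with h | h
      · simp [← h, wmProjPos_zero u]
      · rw [wm_posPart_smul hc, wm_negPart_smul hc, wmProjPos_smul hu h, wmProjPos_smul hu h,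
          smul_sub]
    · have hcn : (0:ℝ) < -c := by linarith
      have hp : (c • f)⁺ = (-c) • f⁻ := by
        rw [show c • f = -((-c) • f) by rw [neg_smul, neg_neg], posPart_neg,
          wm_negPart_smul hcn.le]
      have hn : (c • f)⁻ = (-c) • f⁺ := by
        rw [show c • f = -((-c) • f) by rw [neg_smul, neg_neg], ← posPart_neg, neg_neg,
          wm_posPart_smul hcn.le]
      rw [hp, hn, wmProjPos_smul hu hcn, wmProjPos_smul hu hcn, neg_smul, neg_smul, smul_sub]
      abel

theorem wmProjL_apply_nonneg (u : E) (hu : 0 ≤ u) {f : E} (hf : 0 ≤ f) :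
    wmProjL u hu f = wmProjPos u f := by
  show wmProjPos u f⁺ - wmProjPos u f⁻ = wmProjPos u f
  rw [posPart_eq_self.mpr hf, negPart_eq_zero.mpr hf, wmProjPos_zero u, sub_zero]

theorem wmProjL_isBandProjection (u : E) (hu : 0 ≤ u) : IsBandProjection (wmProjL u hu) := by
  constructor
  · apply LinearMap.ext
    intro f
    rw [Module.End.mul_apply]
    show wmProjL u hu (wmProjPos u f⁺ - wmProjPos u f⁻) = wmProjPos u f⁺ - wmProjPos u f⁻
    rw [map_sub, wmProjL_apply_nonneg u hu (wmProjPos_nonneg (posPart_nonneg f)),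
      wmProjL_apply_nonneg u hu (wmProjPos_nonneg (negPart_nonneg f)),
      wmProjPos_idem, wmProjPos_idem]
  · intro f hf
    rw [wmProjL_apply_nonneg u hu hf]
    exact ⟨wmProjPos_nonneg hf, wmProjPos_le_self u f⟩

end WMProj
section WMConv
set_option linter.unusedSectionVars false

variable {E : Type*} [ConditionallyCompleteLattice E] [AddCommGroup E]
  [CovariantClass E E (· + ·) (· ≤ ·)] [Module ℝ E] [PosSMulMono ℝ E]

theorem wm_oc_y_nonneg {y : ℕ → E} (hy : IsGLB (Set.range y) 0) (n : ℕ) : 0 ≤ y n :=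
  hy.1 ⟨n, rfl⟩

theorem wm_oc_zero : OrderConvergesTo (fun _ : ℕ => (0 : E)) 0 := by
  refine ⟨fun _ => 0, fun _ _ _ => le_rfl, ?_, fun n => by simp⟩
  constructor
  · rintro x ⟨n, rfl⟩; exact le_rfl
  · intro b hb; exact hb ⟨0, rfl⟩

theorem wm_oc_squeeze {x z : ℕ → E} (hx0 : ∀ n, 0 ≤ x n) (hxz : ∀ n, x n ≤ z n)
    (hz : OrderConvergesTo z 0) : OrderConvergesTo x 0 := by
  obtain ⟨y, hy1, hy2, hy3⟩ := hz
  refine ⟨y, hy1, hy2, fun n => ?_⟩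
  rw [sub_zero, abs_of_nonneg (hx0 n)]
  calc x n ≤ z n := hxz n
    _ ≤ |z n| := le_abs_self _
    _ = |z n - 0| := by rw [sub_zero]
    _ ≤ y n := hy3 n

theorem wm_oc_add {x z : ℕ → E} (hx : OrderConvergesTo x 0) (hz : OrderConvergesTo z 0) :
    OrderConvergesTo (fun n => x n + z n) 0 := by
  obtain ⟨y1, hy11, hy12, hy13⟩ := hx
  obtain ⟨y2, hy21, hy22, hy23⟩ := hz
  refine ⟨fun n => y1 n + y2 n, fun a b hab => add_le_add (hy11 hab) (hy21 hab), ?_, fun n => ?_⟩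
  · constructor
    · rintro w ⟨n, rfl⟩
      exact add_nonneg (wm_oc_y_nonneg hy12 n) (wm_oc_y_nonneg hy22 n)
    · intro b hb
      have h1 : ∀ p : ℕ, b ≤ y1 p := by
        intro p
        have h2 : b - y1 p ∈ lowerBounds (Set.range y2) := by
          rintro w ⟨q, rfl⟩
          have hbn : b ≤ y1 (max p q) + y2 (max p q) := hb ⟨max p q, rfl⟩
          have hmono : y1 (max p q) + y2 (max p q) ≤ y2 q + y1 p := by
            rw [add_comm]
            exact add_le_add (hy21 (le_max_right p q)) (hy11 (le_max_left p q))
          exact sub_le_iff_le_add.mpr (hbn.trans hmono)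
        exact sub_nonpos.mp (hy22.2 h2)
      have h4 : b ∈ lowerBounds (Set.range y1) := by rintro w ⟨p, rfl⟩; exact h1 p
      exact hy12.2 h4
  · rw [sub_zero]
    calc |x n + z n| ≤ |x n| + |z n| := abs_add_le _ _
      _ = |x n - 0| + |z n - 0| := by rw [sub_zero, sub_zero]
      _ ≤ y1 n + y2 n := add_le_add (hy13 n) (hy23 n)

theorem wm_oc_smul {x : ℕ → E} {c : ℝ} (hc : 0 ≤ c) (hx : OrderConvergesTo x 0) :
    OrderConvergesTo (fun n => c • x n) 0 := by
  obtain ⟨y, hy1, hy2, hy3⟩ := hx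
  refine ⟨fun n => c • y n, fun a b hab => smul_le_smul_of_nonneg_left (hy1 hab) hc, ?_,
    fun n => ?_⟩
  · constructor
    · rintro w ⟨n, rfl⟩
      exact smul_nonneg hc (wm_oc_y_nonneg hy2 n)
    · intro b hb
      rcases hc.eq_or_lt with h | h
      · have := hb ⟨0, rfl⟩
        simpa [← h] using this
      · have h1 : ∀ n, c⁻¹ • b ≤ y n := by
          intro n
          have := smul_le_smul_of_nonneg_left (hb ⟨n, rfl⟩) (inv_nonneg.mpr hc)
          rwa [inv_smul_smul₀ h.ne'] at this
        have h2 : c⁻¹ • b ≤ 0 := hy2.2 (by rintro w ⟨n, rfl⟩; exact h1 n)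
        have := smul_le_smul_of_nonneg_left h2 hc
        rwa [smul_inv_smul₀ h.ne', smul_zero] at this
  · rw [sub_zero, wm_abs_smul_nonneg hc]
    have := hy3 n; rw [sub_zero] at this
    exact smul_le_smul_of_nonneg_left this hc

theorem wm_oc_approx {e : E} (he : 0 ≤ e) {x : ℕ → E} (hx0 : ∀ n, 0 ≤ x n)
    (h : ∀ j : ℕ, ∃ z : ℕ → E, OrderConvergesTo z 0 ∧
      ∀ n, x n ≤ z n + ((j : ℝ) + 1)⁻¹ • e) :
    OrderConvergesTo x 0 := by
  choose z hz hzb using h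
  have hy : ∀ j : ℕ, ∃ y : ℕ → E, Antitone y ∧ IsGLB (Set.range y) 0 ∧ ∀ n, |z j n - 0| ≤ y n :=
    fun j => hz j
  choose y hy1 hy2 hy3 using hy
  have hzy : ∀ j n, z j n ≤ y j n := by
    intro j n
    calc z j n ≤ |z j n| := le_abs_self _
      _ = |z j n - 0| := by rw [sub_zero]
      _ ≤ y j n := hy3 j n
  set Y : ℕ → E := fun n =>
    Finset.inf' (Finset.range (n + 1)) Finset.nonempty_range_add_one
      (fun j => y j n + ((j : ℝ) + 1)⁻¹ • e) with hY
  have hYle : ∀ n j, j ≤ n → Y n ≤ y j n + ((j : ℝ) + 1)⁻¹ • e := fun n j hj =>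
    Finset.inf'_le _ (Finset.mem_range.mpr (Nat.lt_succ_of_le hj))
  refine ⟨Y, ?_, ?_, fun n => ?_⟩
  · intro a b hab
    apply Finset.le_inf'
    intro j hj
    have hja : j ≤ a := Nat.lt_succ_iff.mp (Finset.mem_range.mp hj)
    calc Y b ≤ y j b + ((j : ℝ) + 1)⁻¹ • e := hYle b j (hja.trans hab)
      _ ≤ y j a + ((j : ℝ) + 1)⁻¹ • e := add_le_add_left (hy1 j hab) _
  · constructor
    · rintro w ⟨n, rfl⟩
      apply Finset.le_inf'
      intro j _
      exact add_nonneg (wm_oc_y_nonneg (hy2 j) n) (smul_nonneg (by positivity) he)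
    · intro d hd
      have key : ∀ j : ℕ, d ≤ ((j : ℝ) + 1)⁻¹ • e := by
        intro j
        have h1 : d - ((j : ℝ) + 1)⁻¹ • e ∈ lowerBounds (Set.range (y j)) := by
          rintro w ⟨m, rfl⟩
          have h2 : d ≤ Y (max j m) := hd ⟨max j m, rfl⟩
          have h3 : Y (max j m) ≤ y j (max j m) + ((j : ℝ) + 1)⁻¹ • e :=
            hYle _ j (le_max_left j m)
          have h4 : y j (max j m) ≤ y j m := hy1 j (le_max_right j m)
          have : d ≤ y j m + ((j : ℝ) + 1)⁻¹ • e :=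
            h2.trans (h3.trans (add_le_add_left h4 _))
          exact sub_le_iff_le_add.mpr this
        exact sub_nonpos.mp ((hy2 j).2 h1)
      exact wm_arch he key
  · rw [sub_zero, abs_of_nonneg (hx0 n)]
    apply Finset.le_inf'
    intro j _
    exact (hzb j n).trans (add_le_add_left (hzy j n) _)

end WMConv
section WMFreud
set_option linter.unusedSectionVars false

variable {E : Type*} [ConditionallyCompleteLattice E] [AddCommGroup E]
  [CovariantClass E E (· + ·) (· ≤ ·)] [Module ℝ E] [PosSMulMono ℝ E]

local instance : IsOrderedAddMonoid E :=
  { add_le_add_left := fun _ _ h c => add_le_add_left h c }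

theorem wm_abel (g : ℕ → E) (N : ℕ) :
    ∑ k ∈ Finset.range N, ((k : ℝ) + 1) • (g k - g (k + 1))
      = (∑ k ∈ Finset.range N, g k) - (N : ℝ) • g N := by
  induction N with
  | zero => simp
  | succ N ih =>
    rw [Finset.sum_range_succ, ih, Finset.sum_range_succ (f := g)]
    push_cast
    rw [smul_sub, add_smul, one_smul]
    all_goals abel

theorem wm_freudenthal {e f : E} (he0 : 0 ≤ e) (hf0 : 0 ≤ f) (hfe : f ≤ e) {N : ℕ}
    (hN : 0 < N) :
    ∃ p : ℕ → E, (∀ i, ∃ Pr : Module.End ℝ E, IsBandProjection Pr ∧ p i = Pr e) ∧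
      |f - (N : ℝ)⁻¹ • ∑ i ∈ Finset.range N, p i| ≤ (N : ℝ)⁻¹ • e := by
  have hNR : (0 : ℝ) < (N : ℝ) := Nat.cast_pos.mpr hN
  set u : ℕ → E := fun i => (f - ((i : ℝ) / (N : ℝ)) • e)⁺ with hu
  have hu0 : ∀ i, 0 ≤ u i := fun i => posPart_nonneg _
  set P : ℕ → Module.End ℝ E := fun i => wmProjL (u i) (hu0 i) with hP
  refine ⟨fun i => P (i + 1) e, fun i => ⟨P (i + 1), wmProjL_isBandProjection _ _, rfl⟩, ?_⟩
  have hu_anti : ∀ i j : ℕ, i ≤ j → u j ≤ u i := by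
    intro i j hij
    apply posPart_mono
    apply sub_le_sub_left
    apply wm_smul_le_smul_right _ he0
    gcongr
  have hPnn : ∀ (i : ℕ) {x : E}, 0 ≤ x → P i x = wmProjPos (u i) x := fun i {x} hx =>
    wmProjL_apply_nonneg (u i) (hu0 i) hx
  have hPpos : ∀ (i : ℕ) {x : E}, 0 ≤ x → 0 ≤ P i x := by
    intro i x hx; rw [hPnn i hx]; exact wmProjPos_nonneg hx
  have hPle : ∀ (i : ℕ) {x : E}, 0 ≤ x → P i x ≤ x := by
    intro i x hx; rw [hPnn i hx]; exact wmProjPos_le_self _ _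
  have hPmono : ∀ (i j : ℕ), i ≤ j → ∀ {x : E}, 0 ≤ x → P j x ≤ P i x := by
    intro i j hij x hx
    rw [hPnn i hx, hPnn j hx]
    exact wmProjPos_mono_u (hu_anti i j hij) x
  have hPkill : ∀ i : ℕ, P i ((f - ((i : ℝ) / (N : ℝ)) • e)⁻) = 0 := by
    intro i
    rw [hPnn i (negPart_nonneg _)]
    apply wmProjPos_disjoint (hu0 i) (negPart_nonneg _)
    rw [inf_comm]
    exact posPart_inf_negPart_eq_zero _
  have hPkill' : ∀ i j : ℕ, i ≤ j → P j ((f - ((i : ℝ) / (N : ℝ)) • e)⁻) = 0 := by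
    intro i j hij
    refine le_antisymm ?_ (hPpos j (negPart_nonneg _))
    rw [← hPkill i]
    exact hPmono i j hij (negPart_nonneg _)
  have hPself : ∀ i : ℕ, P i (u i) = u i := by
    intro i; rw [hPnn i (hu0 i)]; exact wmProjPos_self (hu0 i)
  have hsplit : ∀ i : ℕ, f - ((i : ℝ) / (N : ℝ)) • e
      = u i - (f - ((i : ℝ) / (N : ℝ)) • e)⁻ := fun i => (posPart_sub_negPart _).symm
  -- key1
  have key1 : ∀ k : ℕ, ((k : ℝ) / (N : ℝ)) • (P k e - P (k + 1) e)
      ≤ P k f - P (k + 1) f := by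
    intro k
    have h1 : P k (f - ((k : ℝ) / (N : ℝ)) • e) = u k := by
      rw [hsplit k, map_sub, hPself k, hPkill k, sub_zero]
    have h2 : P (k + 1) (f - ((k : ℝ) / (N : ℝ)) • e) = P (k + 1) (u k) := by
      rw [hsplit k, map_sub, hPkill' k (k + 1) (Nat.le_succ k), sub_zero]
    have hgoal : P k f - P (k + 1) f - ((k : ℝ) / (N : ℝ)) • (P k e - P (k + 1) e)
        = P k (f - ((k : ℝ) / (N : ℝ)) • e) - P (k + 1) (f - ((k : ℝ) / (N : ℝ)) • e) := by
      simp only [map_sub, map_smul, smul_sub]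
      abel
    rw [← sub_nonneg, hgoal, h1, h2]
    exact sub_nonneg.mpr (hPle (k + 1) (hu0 k))
  -- key2
  have key2 : ∀ k : ℕ, P k f - P (k + 1) f
      ≤ (((k + 1 : ℕ) : ℝ) / (N : ℝ)) • (P k e - P (k + 1) e) := by
    intro k
    set w := (f - (((k + 1 : ℕ) : ℝ) / (N : ℝ)) • e)⁻ with hw
    have hw0 : 0 ≤ w := negPart_nonneg _
    have h1 : P (k + 1) (f - (((k + 1 : ℕ) : ℝ) / (N : ℝ)) • e) = u (k + 1) := by
      rw [hsplit (k + 1), ← hw, map_sub, hPself (k + 1), hw, hPkill (k + 1), sub_zero]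
    have h2 : P k (f - (((k + 1 : ℕ) : ℝ) / (N : ℝ)) • e)
        = P k (u (k + 1)) - P k w := by
      rw [hsplit (k + 1), ← hw, map_sub]
    have hgoal : P k f - P (k + 1) f
        - (((k + 1 : ℕ) : ℝ) / (N : ℝ)) • (P k e - P (k + 1) e)
        = P k (f - (((k + 1 : ℕ) : ℝ) / (N : ℝ)) • e)
          - P (k + 1) (f - (((k + 1 : ℕ) : ℝ) / (N : ℝ)) • e) := by
      simp only [map_sub, map_smul, smul_sub]
      abel
    rw [← sub_nonpos, hgoal, h1, h2]
    have h4 : P k (u (k + 1)) - P k w ≤ u (k + 1) :=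
      (sub_le_self _ (hPpos k hw0)).trans (hPle k (hu0 (k + 1)))
    exact sub_nonpos.mpr h4
  -- key3 : bottom layer
  have key3 : f - P 1 f ≤ (((1 : ℕ) : ℝ) / (N : ℝ)) • (e - P 1 e) := by
    have h1 : P 1 (f - (((1 : ℕ) : ℝ) / (N : ℝ)) • e) = u 1 := by
      rw [hsplit 1, map_sub, hPself 1, hPkill 1, sub_zero]
    have hgoal : (f - P 1 f) - (((1 : ℕ) : ℝ) / (N : ℝ)) • (e - P 1 e)
        = (f - (((1 : ℕ) : ℝ) / (N : ℝ)) • e) - P 1 (f - (((1 : ℕ) : ℝ) / (N : ℝ)) • e) := by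
      simp only [map_sub, map_smul, smul_sub]
      abel
    rw [← sub_nonpos, hgoal, h1, hsplit 1]
    have : u 1 - (f - (((1 : ℕ) : ℝ) / (N : ℝ)) • e)⁻ - u 1
        = -((f - (((1 : ℕ) : ℝ) / (N : ℝ)) • e)⁻) := by abel
    rw [this]
    exact neg_nonpos.mpr (negPart_nonneg _)
  -- P (N+1) vanishes
  have huN1 : u (N + 1) = 0 := by
    apply posPart_eq_zero.mpr
    rw [sub_nonpos]
    calc f ≤ e := hfe
      _ = (1 : ℝ) • e := (one_smul ℝ e).symm
      _ ≤ (((N + 1 : ℕ) : ℝ) / (N : ℝ)) • e := by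
          apply wm_smul_le_smul_right _ he0
          rw [le_div_iff₀ hNR]
          push_cast
          linarith
  have hPN1 : ∀ {x : E}, 0 ≤ x → P (N + 1) x = 0 := by
    intro x hx
    rw [hPnn (N + 1) hx, huN1]
    exact wmProjPos_of_zero hx
  set q : ℕ → E := fun k => P (k + 1) e with hq
  set r : ℕ → E := fun k => P (k + 1) f with hr
  have hqN0 : q N = 0 := hPN1 he0
  have hrN0 : r N = 0 := hPN1 hf0
  have hq0 : q 0 = P 1 e := rfl
  have hr0 : r 0 = P 1 f := rfl
  -- scaled key1
  have key1' : ∀ k : ℕ, ((k : ℝ) + 1) • (q k - q (k + 1)) ≤ (N : ℝ) • (r k - r (k + 1)) := by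
    intro k
    have h := key1 (k + 1)
    have h2 := smul_le_smul_of_nonneg_left h hNR.le
    rw [smul_smul] at h2
    have h3 : (N : ℝ) * (((k + 1 : ℕ) : ℝ) / (N : ℝ)) = (k : ℝ) + 1 := by
      push_cast; field_simp
    rw [h3] at h2
    exact h2
  -- scaled key2
  have key2' : ∀ k : ℕ, r k - r (k + 1) ≤ (N : ℝ)⁻¹ • (((k : ℝ) + 2) • (q k - q (k + 1))) := by
    intro k
    have h := key2 (k + 1)
    have h3 : (((k + 1 + 1 : ℕ) : ℝ) / (N : ℝ)) = (N : ℝ)⁻¹ * ((k : ℝ) + 2) := by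
      push_cast; field_simp; ring
    rw [h3, ← smul_smul] at h
    exact h
  -- sum A : upper bound by N • f
  have sumA : ∑ i ∈ Finset.range N, q i ≤ (N : ℝ) • f := by
    calc ∑ i ∈ Finset.range N, q i
        = ∑ k ∈ Finset.range N, ((k : ℝ) + 1) • (q k - q (k + 1)) := by
          rw [wm_abel q N, hqN0, smul_zero, sub_zero]
      _ ≤ ∑ k ∈ Finset.range N, (N : ℝ) • (r k - r (k + 1)) :=
          Finset.sum_le_sum fun k _ => key1' k
      _ = (N : ℝ) • ∑ k ∈ Finset.range N, (r k - r (k + 1)) := (Finset.smul_sum).symm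
      _ = (N : ℝ) • (r 0 - r N) := by rw [Finset.sum_range_sub' r N]
      _ = (N : ℝ) • P 1 f := by rw [hrN0, sub_zero, hr0]
      _ ≤ (N : ℝ) • f := smul_le_smul_of_nonneg_left (hPle 1 hf0) hNR.le
  -- sum B : lower bound
  have sumB : f ≤ (N : ℝ)⁻¹ • e + (N : ℝ)⁻¹ • ∑ i ∈ Finset.range N, q i := by
    have hdec : f = (f - P 1 f) + (∑ k ∈ Finset.range N, (r k - r (k + 1))) + r N := by
      rw [Finset.sum_range_sub' r N, hr0]
      abel
    have key3' : f - P 1 f ≤ (N : ℝ)⁻¹ • (e - P 1 e) := by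
      have h := key3
      rwa [Nat.cast_one, one_div] at h
    have hsum2 : ∑ k ∈ Finset.range N, (N : ℝ)⁻¹ • (((k : ℝ) + 2) • (q k - q (k + 1)))
        = (N : ℝ)⁻¹ • (∑ i ∈ Finset.range N, q i + P 1 e) := by
      rw [← Finset.smul_sum]
      congr 1
      have hterm : ∀ k : ℕ, ((k : ℝ) + 2) • (q k - q (k + 1))
          = ((k : ℝ) + 1) • (q k - q (k + 1)) + (q k - q (k + 1)) := by
        intro k
        rw [show ((k : ℝ) + 2) = ((k : ℝ) + 1) + 1 by ring, add_smul, one_smul]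
      rw [Finset.sum_congr rfl fun k _ => hterm k, Finset.sum_add_distrib, wm_abel q N,
        Finset.sum_range_sub' q N, hqN0, hq0, smul_zero, sub_zero, sub_zero]
    calc f = (f - P 1 f) + (∑ k ∈ Finset.range N, (r k - r (k + 1))) + r N := hdec
      _ ≤ (N : ℝ)⁻¹ • (e - P 1 e)
          + (∑ k ∈ Finset.range N, (N : ℝ)⁻¹ • (((k : ℝ) + 2) • (q k - q (k + 1)))) + 0 := by
          refine add_le_add (add_le_add key3' (Finset.sum_le_sum fun k _ => key2' k)) ?_
          rw [hrN0]
      _ = (N : ℝ)⁻¹ • (e - P 1 e) + (N : ℝ)⁻¹ • (∑ i ∈ Finset.range N, q i + P 1 e) := by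
          rw [hsum2, add_zero]
      _ = (N : ℝ)⁻¹ • e + (N : ℝ)⁻¹ • ∑ i ∈ Finset.range N, q i := by
          rw [← smul_add, ← smul_add]
          congr 1
          abel
  -- conclusion
  have hlo : (N : ℝ)⁻¹ • ∑ i ∈ Finset.range N, q i ≤ f := by
    have h := smul_le_smul_of_nonneg_left sumA (inv_nonneg.mpr hNR.le)
    rwa [smul_smul, inv_mul_cancel₀ hNR.ne', one_smul] at h
  have hup : f - (N : ℝ)⁻¹ • ∑ i ∈ Finset.range N, q i ≤ (N : ℝ)⁻¹ • e :=
    sub_le_iff_le_add.mpr sumB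
  show |f - (N : ℝ)⁻¹ • ∑ i ∈ Finset.range N, q i| ≤ (N : ℝ)⁻¹ • e
  rw [abs_of_nonneg (sub_nonneg.mpr hlo)]
  exact hup

end WMFreud
section WMExt
set_option linter.unusedSectionVars false

variable {E : Type*} [ConditionallyCompleteLattice E] [AddCommGroup E]
  [CovariantClass E E (· + ·) (· ≤ ·)] [Module ℝ E] [PosSMulMono ℝ E]

theorem wm_ext (e : E) (he0 : 0 ≤ e) (A : E → ℕ → E)
    (hA0 : ∀ h n, 0 ≤ A h n)
    (hAadd : ∀ h h' n, A (h + h') n ≤ A h n + A h' n)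
    (hAsmul : ∀ (c : ℝ) (h : E) (n : ℕ), A (c • h) n = |c| • A h n)
    {C : ℝ} (hC : 0 ≤ C)
    (hAbd : ∀ (c : ℝ) (h : E), 0 ≤ c → |h| ≤ c • e → ∀ n, A h n ≤ (c * C) • e)
    (hgood : ∀ P : Module.End ℝ E, IsBandProjection P → OrderConvergesTo (A (P e)) 0) :
    ∀ (f : E) (c : ℝ), 0 ≤ c → |f| ≤ c • e → OrderConvergesTo (A f) 0 := by
  have good0 : OrderConvergesTo (A 0) 0 := by
    have hz : ∀ n, A 0 n = 0 := by
      intro n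
      have h := hAsmul 0 0 n
      simpa using h
    exact wm_oc_squeeze (fun n => (hz n).ge) (fun n => (hz n).le) wm_oc_zero
  have goodAdd : ∀ {h h' : E}, OrderConvergesTo (A h) 0 → OrderConvergesTo (A h') 0 →
      OrderConvergesTo (A (h + h')) 0 := fun {h h'} h1 h2 =>
    wm_oc_squeeze (hA0 _) (hAadd h h') (wm_oc_add h1 h2)
  have goodSmul : ∀ (c : ℝ) {h : E}, OrderConvergesTo (A h) 0 →
      OrderConvergesTo (A (c • h)) 0 := by
    intro c h hh
    have h2 := wm_oc_smul (abs_nonneg c) hh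
    have heq : (fun n => |c| • A h n) = A (c • h) := by
      funext n; rw [hAsmul]
    rwa [heq] at h2
  have good_e_scaled : ∀ h : E, 0 ≤ h → h ≤ e → OrderConvergesTo (A h) 0 := by
    intro h h0 h1
    have hCe : (0 : E) ≤ C • e := smul_nonneg hC he0
    apply wm_oc_approx hCe (fun n => hA0 h n)
    intro j
    obtain ⟨p, hp, happ⟩ := wm_freudenthal he0 h0 h1 (Nat.succ_pos j)
    set g := (((j + 1 : ℕ) : ℝ))⁻¹ • ∑ i ∈ Finset.range (j + 1), p i with hg
    have goodg : OrderConvergesTo (A g) 0 := by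
      apply goodSmul
      apply Finset.sum_induction p (fun x => OrderConvergesTo (A x) 0)
        (fun a b ha hb => goodAdd ha hb) good0
      intro i _
      obtain ⟨Pr, hPr, hpi⟩ := hp i
      rw [hpi]; exact hgood Pr hPr
    refine ⟨A g, goodg, ?_⟩
    intro n
    have hsplit : A h n ≤ A g n + A (h - g) n := by
      have h3 := hAadd g (h - g) n
      have h4 : g + (h - g) = h := by abel
      rwa [h4] at h3
    have hcast : (((j + 1 : ℕ) : ℝ))⁻¹ = ((j : ℝ) + 1)⁻¹ := by push_cast; ring
    have hbd : A (h - g) n ≤ (((j : ℝ) + 1)⁻¹ * C) • e := by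
      apply hAbd _ _ (by positivity) _ n
      rw [← hcast]
      exact happ
    calc A h n ≤ A g n + A (h - g) n := hsplit
      _ ≤ A g n + ((j : ℝ) + 1)⁻¹ • (C • e) := by
          refine add_le_add_right ?_ _
          rwa [smul_smul]
  intro f c hc hfc
  have hposle : f⁺ ≤ c • e := by
    refine le_trans ?_ hfc
    rw [← posPart_add_negPart f]
    exact le_add_of_nonneg_right (negPart_nonneg f)
  have hnegle : f⁻ ≤ c • e := by
    refine le_trans ?_ hfc
    rw [← posPart_add_negPart f]
    exact le_add_of_nonneg_left (posPart_nonneg f)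
  have goodPos : ∀ x : E, 0 ≤ x → x ≤ c • e → OrderConvergesTo (A x) 0 := by
    intro x hx0 hxle
    rcases hc.eq_or_lt with h | h
    · have hx : x = 0 := le_antisymm (by rw [← h, zero_smul] at hxle; exact hxle) hx0
      rw [hx]; exact good0
    · have h1 : c⁻¹ • x ≤ e := by
        have h2 := smul_le_smul_of_nonneg_left hxle (inv_nonneg.mpr h.le)
        rwa [inv_smul_smul₀ h.ne'] at h2
      have h2 : 0 ≤ c⁻¹ • x := smul_nonneg (inv_nonneg.mpr h.le) hx0
      have h3 := goodSmul c (good_e_scaled _ h2 h1)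
      rwa [smul_inv_smul₀ h.ne'] at h3
  have g1 := goodPos f⁺ (posPart_nonneg f) hposle
  have g2 := goodPos f⁻ (negPart_nonneg f) hnegle
  have g3 := goodAdd g1 (goodSmul (-1) g2)
  have heq : f⁺ + (-1 : ℝ) • f⁻ = f := by
    rw [neg_one_smul, ← sub_eq_add_neg]
    exact posPart_sub_negPart f
  rwa [heq] at g3

end WMExt
/-- If the conditional expectation preserving system `(E,T,S,e)` is weakly mixing (for
band projections), then the weak mixing Cesàro convergence extends to all `f, g` in the
ideal `E_e` of `e`-bounded elements, where `mul` is the `f`-algebra multiplication on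
`E_e` (characterised by `Pe · Qe = PQe` and positivity). -/
theorem stmt13 {E : Type*} [ConditionallyCompleteLattice E] [AddCommGroup E]
    [CovariantClass E E (· + ·) (· ≤ ·)] [Module ℝ E] [PosSMulMono ℝ E]
    (e : E) (he : IsWeakOrderUnit e)
    (T : Module.End ℝ E) (hT : IsConditionalExpectation T) (hTe : T e = e)
    (S : Module.End ℝ E) (hS : IsOrderContRieszHom S) (hSe : S e = e)
    (hTS : ∀ f : E, T (S f) = T f)
    (mul : E →ₗ[ℝ] E →ₗ[ℝ] E)
    (hmul_proj : ∀ P Q : Module.End ℝ E, IsBandProjection P → IsBandProjection Q →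
      mul (P e) (Q e) = P (Q e))
    (hmul_pos : ∀ f g : E, 0 ≤ f → 0 ≤ g → 0 ≤ mul f g)
    (hmix : ∀ P Q : Module.End ℝ E, IsBandProjection P → IsBandProjection Q →
      OrderConvergesTo (fun n => (n : ℝ)⁻¹ • ∑ k ∈ Finset.range n,
        |T (mul ((S ^ k) (P e)) (Q e)) - mul (T (P e)) (T (Q e))|) 0) :
    ∀ f g : E, (∃ k : ℝ, |f| ≤ k • e) → (∃ k : ℝ, |g| ≤ k • e) →
      OrderConvergesTo (fun n => (n : ℝ)⁻¹ • ∑ k ∈ Finset.range n,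
        |T (mul ((S ^ k) f) g) - mul (T f) (T g)|) 0 := by
  letI : IsOrderedAddMonoid E :=
    { add_le_add_left := fun _ _ h c => add_le_add_left h c }
  have he0 : (0 : E) ≤ e := he.1.le
  -- operator facts
  have Tmono : ∀ {a b : E}, a ≤ b → T a ≤ T b := by
    intro a b hab
    have h := hT.positive _ (sub_nonneg.mpr hab)
    rw [map_sub] at h
    exact sub_nonneg.mp h
  have Tabs : ∀ x : E, |T x| ≤ T |x| := by
    intro x
    refine abs_le'.mpr ⟨Tmono (le_abs_self x), ?_⟩
    rw [← map_neg]
    exact Tmono (neg_le_abs x)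
  have Spos : ∀ {x : E}, 0 ≤ x → 0 ≤ S x := by
    intro x hx
    have h1 : S (x ⊔ 0) = S x ⊔ S 0 := hS.latticeHom x 0
    rw [sup_eq_left.mpr hx, map_zero] at h1
    rw [h1]
    exact le_sup_right
  have Sabs : ∀ x : E, S |x| = |S x| := by
    intro x
    rw [wm_abs_def, wm_abs_def, hS.latticeHom, map_neg]
  have Ske : ∀ k : ℕ, (S ^ k) e = e := by
    intro k
    induction k with
    | zero => rw [pow_zero, Module.End.one_apply]
    | succ k ih => rw [pow_succ, Module.End.mul_apply, hSe, ih]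
  have Skabs : ∀ (k : ℕ) (x : E), (S ^ k) |x| = |(S ^ k) x| := by
    intro k
    induction k with
    | zero => intro x; rw [pow_zero, Module.End.one_apply, Module.End.one_apply]
    | succ k ih =>
      intro x
      rw [pow_succ, Module.End.mul_apply, Module.End.mul_apply, Sabs x, ih (S x)]
  have Skmono : ∀ (k : ℕ) {a b : E}, a ≤ b → (S ^ k) a ≤ (S ^ k) b := by
    intro k a b hab
    have hpos : ∀ {x : E}, 0 ≤ x → 0 ≤ (S ^ k) x := by
      intro x hx
      have h1 : (S ^ k) x = |(S ^ k) x| := by rw [← Skabs, abs_of_nonneg hx]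
      rw [h1]; exact abs_nonneg _
    have h := hpos (sub_nonneg.mpr hab)
    rw [map_sub] at h
    exact sub_nonneg.mp h
  have band1 : IsBandProjection (1 : Module.End ℝ E) :=
    ⟨one_mul 1, fun x hx => ⟨by rwa [Module.End.one_apply], by rw [Module.End.one_apply]⟩⟩
  have mule : mul e e = e := by
    have h := hmul_proj 1 1 band1 band1
    rwa [Module.End.one_apply, Module.End.one_apply] at h
  have mul_mono_left : ∀ {a b : E} (y : E), a ≤ b → 0 ≤ y → mul a y ≤ mul b y := by
    intro a b y hab hy
    have h : (0 : E) ≤ mul (b - a) y := hmul_pos _ _ (sub_nonneg.mpr hab) hy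
    rw [map_sub, LinearMap.sub_apply] at h
    exact sub_nonneg.mp h
  have mul_mono_right : ∀ (a : E) {x y : E}, 0 ≤ a → x ≤ y → mul a x ≤ mul a y := by
    intro a x y ha hxy
    have h : (0 : E) ≤ mul a (y - x) := hmul_pos _ _ ha (sub_nonneg.mpr hxy)
    rw [map_sub] at h
    exact sub_nonneg.mp h
  have mulabs : ∀ a b : E, |mul a b| ≤ mul |a| |b| := by
    intro a b
    have t1 : (0:E) ≤ mul a⁺ b⁺ := hmul_pos _ _ (posPart_nonneg a) (posPart_nonneg b)
    have t2 : (0:E) ≤ mul a⁺ b⁻ := hmul_pos _ _ (posPart_nonneg a) (negPart_nonneg b)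
    have t3 : (0:E) ≤ mul a⁻ b⁺ := hmul_pos _ _ (negPart_nonneg a) (posPart_nonneg b)
    have t4 : (0:E) ≤ mul a⁻ b⁻ := hmul_pos _ _ (negPart_nonneg a) (negPart_nonneg b)
    have hexp : mul |a| |b| = mul a⁺ b⁺ + mul a⁺ b⁻ + mul a⁻ b⁺ + mul a⁻ b⁻ := by
      rw [← posPart_add_negPart a, ← posPart_add_negPart b]
      simp only [map_add, LinearMap.add_apply]
      abel
    have hexp2 : mul a b = mul a⁺ b⁺ - mul a⁺ b⁻ - mul a⁻ b⁺ + mul a⁻ b⁻ := by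
      conv_lhs => rw [← posPart_sub_negPart a, ← posPart_sub_negPart b]
      simp only [map_sub, LinearMap.sub_apply]
      abel
    refine abs_le'.mpr ⟨?_, ?_⟩
    · have hdiff : mul |a| |b| - mul a b = (mul a⁺ b⁻ + mul a⁺ b⁻) + (mul a⁻ b⁺ + mul a⁻ b⁺) := by
        rw [hexp, hexp2]; abel
      rw [← sub_nonneg, hdiff]
      exact add_nonneg (add_nonneg t2 t2) (add_nonneg t3 t3)
    · have hdiff2 : mul |a| |b| - -(mul a b) = (mul a⁺ b⁺ + mul a⁺ b⁺) + (mul a⁻ b⁻ + mul a⁻ b⁻) := by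
        rw [hexp, hexp2]; abel
      rw [← sub_nonneg, hdiff2]
      exact add_nonneg (add_nonneg t1 t1) (add_nonneg t4 t4)
  -- uniform bound on the summands
  have hWbd : ∀ (x y : E) (cx cy : ℝ), 0 ≤ cx → 0 ≤ cy → |x| ≤ cx • e → |y| ≤ cy • e →
      ∀ k : ℕ, |T (mul ((S ^ k) x) y) - mul (T x) (T y)| ≤ (cx * cy + cx * cy) • e := by
    intro x y cx cy hcx hcy hx hy k
    have hcxe : (0:E) ≤ cx • e := smul_nonneg hcx he0
    have hmulce : mul (cx • e) (cy • e) = (cx * cy) • e := by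
      rw [map_smul mul cx e, LinearMap.smul_apply, map_smul (mul e), mule, smul_smul]
    have hSk : |(S ^ k) x| ≤ cx • e := by
      rw [← Skabs]
      calc (S ^ k) |x| ≤ (S ^ k) (cx • e) := Skmono k hx
        _ = cx • e := by rw [map_smul, Ske k]
    have hX : |T (mul ((S ^ k) x) y)| ≤ (cx * cy) • e := by
      calc |T (mul ((S ^ k) x) y)| ≤ T |mul ((S ^ k) x) y| := Tabs _
        _ ≤ T (mul |(S ^ k) x| |y|) := Tmono (mulabs _ _)
        _ ≤ T (mul (cx • e) (cy • e)) :=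
            Tmono ((mul_mono_left _ hSk (abs_nonneg y)).trans (mul_mono_right _ hcxe hy))
        _ = (cx * cy) • e := by rw [hmulce, map_smul, hTe]
    have hTx : |T x| ≤ cx • e := by
      calc |T x| ≤ T |x| := Tabs x
        _ ≤ T (cx • e) := Tmono hx
        _ = cx • e := by rw [map_smul, hTe]
    have hTy : |T y| ≤ cy • e := by
      calc |T y| ≤ T |y| := Tabs y
        _ ≤ T (cy • e) := Tmono hy
        _ = cy • e := by rw [map_smul, hTe]
    have hY : |mul (T x) (T y)| ≤ (cx * cy) • e := by
      calc |mul (T x) (T y)| ≤ mul |T x| |T y| := mulabs _ _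
        _ ≤ mul (cx • e) (cy • e) :=
            (mul_mono_left _ hTx (abs_nonneg _)).trans (mul_mono_right _ hcxe hTy)
        _ = (cx * cy) • e := hmulce
    calc |T (mul ((S ^ k) x) y) - mul (T x) (T y)|
        ≤ |T (mul ((S ^ k) x) y)| + |mul (T x) (T y)| := by
          rw [sub_eq_add_neg]
          exact (abs_add_le _ _).trans (by rw [abs_neg])
      _ ≤ (cx * cy) • e + (cx * cy) • e := add_le_add hX hY
      _ = (cx * cy + cx * cy) • e := (add_smul _ _ _).symm
  -- Cesàro average bound
  have hAbd_gen : ∀ (x y : E) (cx cy : ℝ), 0 ≤ cx → 0 ≤ cy → |x| ≤ cx • e → |y| ≤ cy • e →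
      ∀ n : ℕ, (n : ℝ)⁻¹ • ∑ k ∈ Finset.range n,
          |T (mul ((S ^ k) x) y) - mul (T x) (T y)| ≤ (cx * (2 * cy)) • e := by
    intro x y cx cy hcx hcy hx hy n
    have hb0 : (0:E) ≤ (cx * (2 * cy)) • e := smul_nonneg (by positivity) he0
    rcases Nat.eq_zero_or_pos n with h | h
    · subst h
      simp only [Nat.cast_zero, inv_zero, zero_smul, Finset.range_zero, Finset.sum_empty]
      exact hb0
    · have hNR : (0:ℝ) < (n : ℝ) := Nat.cast_pos.mpr h
      have hsum : ∑ k ∈ Finset.range n, |T (mul ((S ^ k) x) y) - mul (T x) (T y)|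
          ≤ n • ((cx * cy + cx * cy) • e) := by
        have := Finset.sum_le_card_nsmul (Finset.range n)
          (fun k => |T (mul ((S ^ k) x) y) - mul (T x) (T y)|)
          ((cx * cy + cx * cy) • e) (fun k _ => hWbd x y cx cy hcx hcy hx hy k)
        rwa [Finset.card_range] at this
      have h2 := smul_le_smul_of_nonneg_left hsum (inv_nonneg.mpr hNR.le)
      rw [← Nat.cast_smul_eq_nsmul ℝ n, smul_smul, inv_mul_cancel₀ hNR.ne', one_smul] at h2
      refine h2.trans (le_of_eq ?_)
      rw [show cx * cy + cx * cy = cx * (2 * cy) by ring]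
  -- subadditivity and homogeneity in the first slot
  have hWadd1 : ∀ (x x' y : E) (k : ℕ),
      |T (mul ((S ^ k) (x + x')) y) - mul (T (x + x')) (T y)|
        ≤ |T (mul ((S ^ k) x) y) - mul (T x) (T y)|
          + |T (mul ((S ^ k) x') y) - mul (T x') (T y)| := by
    intro x x' y k
    have he1 : T (mul ((S ^ k) (x + x')) y) - mul (T (x + x')) (T y)
        = (T (mul ((S ^ k) x) y) - mul (T x) (T y))
          + (T (mul ((S ^ k) x') y) - mul (T x') (T y)) := by
      rw [map_add (S ^ k), map_add T x x', map_add mul, LinearMap.add_apply, map_add T,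
        map_add mul, LinearMap.add_apply]
      abel
    rw [he1]
    exact abs_add_le _ _
  have hWsmul1 : ∀ (c : ℝ) (x y : E) (k : ℕ),
      |T (mul ((S ^ k) (c • x)) y) - mul (T (c • x)) (T y)|
        = |c| • |T (mul ((S ^ k) x) y) - mul (T x) (T y)| := by
    intro c x y k
    have he1 : T (mul ((S ^ k) (c • x)) y) - mul (T (c • x)) (T y)
        = c • (T (mul ((S ^ k) x) y) - mul (T x) (T y)) := by
      rw [map_smul (S ^ k), map_smul T c x, map_smul mul, LinearMap.smul_apply, map_smul T,
        map_smul mul, LinearMap.smul_apply, smul_sub]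
    rw [he1, wm_abs_smul]
  -- subadditivity and homogeneity in the second slot
  have hWadd2 : ∀ (x y y' : E) (k : ℕ),
      |T (mul ((S ^ k) x) (y + y')) - mul (T x) (T (y + y'))|
        ≤ |T (mul ((S ^ k) x) y) - mul (T x) (T y)|
          + |T (mul ((S ^ k) x) y') - mul (T x) (T y')| := by
    intro x y y' k
    have he1 : T (mul ((S ^ k) x) (y + y')) - mul (T x) (T (y + y'))
        = (T (mul ((S ^ k) x) y) - mul (T x) (T y))
          + (T (mul ((S ^ k) x) y') - mul (T x) (T y')) := by
      rw [map_add (mul ((S ^ k) x)), map_add T (mul ((S ^ k) x) y), map_add T y y',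
        map_add (mul (T x))]
      abel
    rw [he1]
    exact abs_add_le _ _
  have hWsmul2 : ∀ (c : ℝ) (x y : E) (k : ℕ),
      |T (mul ((S ^ k) x) (c • y)) - mul (T x) (T (c • y))|
        = |c| • |T (mul ((S ^ k) x) y) - mul (T x) (T y)| := by
    intro c x y k
    have he1 : T (mul ((S ^ k) x) (c • y)) - mul (T x) (T (c • y))
        = c • (T (mul ((S ^ k) x) y) - mul (T x) (T y)) := by
      rw [map_smul (mul ((S ^ k) x)), map_smul T c (mul ((S ^ k) x) y), map_smul T c y,
        map_smul (mul (T x)), smul_sub]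
    rw [he1, wm_abs_smul]
  -- generic Cesàro facts
  have hA0 : ∀ (w : ℕ → E) (n : ℕ), (∀ k, 0 ≤ w k) →
      (0:E) ≤ (n : ℝ)⁻¹ • ∑ k ∈ Finset.range n, w k := fun w n hw =>
    smul_nonneg (by positivity) (Finset.sum_nonneg fun k _ => hw k)
  have hAadd_gen : ∀ (w w1 w2 : ℕ → E) (n : ℕ), (∀ k, w k ≤ w1 k + w2 k) →
      (n : ℝ)⁻¹ • ∑ k ∈ Finset.range n, w k
        ≤ (n : ℝ)⁻¹ • ∑ k ∈ Finset.range n, w1 k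
          + (n : ℝ)⁻¹ • ∑ k ∈ Finset.range n, w2 k := by
    intro w w1 w2 n hw
    rw [← smul_add, ← Finset.sum_add_distrib]
    exact smul_le_smul_of_nonneg_left (Finset.sum_le_sum fun k _ => hw k) (by positivity)
  have hAsmul_gen : ∀ (c : ℝ) (w w' : ℕ → E) (n : ℕ), (∀ k, w k = |c| • w' k) →
      (n : ℝ)⁻¹ • ∑ k ∈ Finset.range n, w k
        = |c| • ((n : ℝ)⁻¹ • ∑ k ∈ Finset.range n, w' k) := by
    intro c w w' n hw
    rw [Finset.sum_congr rfl fun k _ => hw k, ← Finset.smul_sum, smul_smul, mul_comm,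
      ← smul_smul]
  -- stage 1 : fixed band projection in the second slot
  have stage1 : ∀ Q : Module.End ℝ E, IsBandProjection Q →
      ∀ (x : E) (cx : ℝ), 0 ≤ cx → |x| ≤ cx • e →
      OrderConvergesTo (fun n => (n : ℝ)⁻¹ • ∑ k ∈ Finset.range n,
        |T (mul ((S ^ k) x) (Q e)) - mul (T x) (T (Q e))|) 0 := by
    intro Q hQ
    have hQe0 : (0:E) ≤ Q e := (hQ.2 e he0).1
    have hQe1 : |Q e| ≤ (1:ℝ) • e := by
      rw [abs_of_nonneg hQe0, one_smul]; exact (hQ.2 e he0).2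
    exact wm_ext e he0
      (fun x n => (n : ℝ)⁻¹ • ∑ k ∈ Finset.range n,
        |T (mul ((S ^ k) x) (Q e)) - mul (T x) (T (Q e))|)
      (fun h n => hA0 _ n fun k => abs_nonneg _)
      (fun h h' n => hAadd_gen _ _ _ n fun k => hWadd1 h h' (Q e) k)
      (fun c h n => hAsmul_gen c _ _ n fun k => hWsmul1 c h (Q e) k)
      (by norm_num : (0:ℝ) ≤ 2 * 1)
      (fun c h hc hh n => hAbd_gen h (Q e) c 1 hc zero_le_one hh hQe1 n)
      (fun P hP => hmix P Q hP hQ)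
  -- stage 2
  intro f g hf hg
  obtain ⟨cf0, hf0⟩ := hf
  obtain ⟨cg0, hg0⟩ := hg
  have hcf : (0:ℝ) ≤ max cf0 0 := le_max_right _ _
  have hcg : (0:ℝ) ≤ max cg0 0 := le_max_right _ _
  have hfc : |f| ≤ (max cf0 0) • e :=
    hf0.trans (wm_smul_le_smul_right (le_max_left _ _) he0)
  have hgc : |g| ≤ (max cg0 0) • e :=
    hg0.trans (wm_smul_le_smul_right (le_max_left _ _) he0)
  exact wm_ext e he0
    (fun y n => (n : ℝ)⁻¹ • ∑ k ∈ Finset.range n,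
      |T (mul ((S ^ k) f) y) - mul (T f) (T y)|)
    (fun h n => hA0 _ n fun k => abs_nonneg _)
    (fun h h' n => hAadd_gen _ _ _ n fun k => hWadd2 f h h' k)
    (fun c h n => hAsmul_gen c _ _ n fun k => hWsmul2 c f h k)
    (by positivity : (0:ℝ) ≤ 2 * max cf0 0)
    (fun c h hc hh n => by
      have := hAbd_gen f h (max cf0 0) c hcf hc hfc hh n
      rwa [show max cf0 0 * (2 * c) = c * (2 * max cf0 0) by ring] at this)
    (fun Q hQ => stage1 Q hQ f (max cf0 0) hcf hfc)
    g (max cg0 0) hcg hgc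
end

section
/- Let E be a Dedekind complete Riesz space with weak order unit e, let T be a conditional expectation operator on E with Te = e, and let S be an order-continuous Riesz homomorphism on E with Se = e. If TSPe = TPe for every band projection P on E, then TSf = Tf for all f ∈ E. -/
open Filter Finset

section Aux

variable {E : Type*} [ConditionallyCompleteLattice E] [AddCommGroup E]
  [CovariantClass E E (· + ·) (· ≤ ·)] [Module ℝ E] [PosSMulMono ℝ E]

private lemma scalar_mono {a b : ℝ} (hab : a ≤ b) {x : E} (hx : 0 ≤ x) : a • x ≤ b • x := by
  have h := smul_nonneg (sub_nonneg.mpr hab) hx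
  rw [sub_smul] at h
  exact sub_nonneg.mp h

private lemma inf_add_right' (x y z : E) : (x + z) ⊓ (y + z) = x ⊓ y + z := by
  apply le_antisymm
  · rw [← sub_le_iff_le_add]
    exact le_inf (by simpa [sub_le_iff_le_add] using inf_le_left (a := x + z) (b := y + z))
      (by simpa [sub_le_iff_le_add] using inf_le_right (a := x + z) (b := y + z))
  · exact le_inf (add_le_add_left inf_le_left z) (add_le_add_left inf_le_right z)

private lemma smul_inf' {r : ℝ} (hr : 0 < r) (x y : E) : r • (x ⊓ y) = r • x ⊓ r • y := by
  apply le_antisymm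
  · exact le_inf (smul_le_smul_of_nonneg_left inf_le_left hr.le)
      (smul_le_smul_of_nonneg_left inf_le_right hr.le)
  · have h1 : r⁻¹ • (r • x ⊓ r • y) ≤ x ⊓ y := by
      refine le_inf ?_ ?_
      · have := smul_le_smul_of_nonneg_left (inf_le_left (a := r • x) (b := r • y))
          (inv_nonneg.mpr hr.le)
        rwa [inv_smul_smul₀ hr.ne'] at this
      · have := smul_le_smul_of_nonneg_left (inf_le_right (a := r • x) (b := r • y))
          (inv_nonneg.mpr hr.le)
        rwa [inv_smul_smul₀ hr.ne'] at this
    calc r • x ⊓ r • y = r • (r⁻¹ • (r • x ⊓ r • y)) := (smul_inv_smul₀ hr.ne' _).symm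
      _ ≤ r • (x ⊓ y) := smul_le_smul_of_nonneg_left h1 hr.le

private lemma smul_sup' {r : ℝ} (hr : 0 < r) (x y : E) : r • (x ⊔ y) = r • x ⊔ r • y := by
  apply le_antisymm
  · have h1 : x ⊔ y ≤ r⁻¹ • (r • x ⊔ r • y) := by
      refine sup_le ?_ ?_
      · have := smul_le_smul_of_nonneg_left (le_sup_left (a := r • x) (b := r • y))
          (inv_nonneg.mpr hr.le)
        rwa [inv_smul_smul₀ hr.ne'] at this
      · have := smul_le_smul_of_nonneg_left (le_sup_right (a := r • x) (b := r • y))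
          (inv_nonneg.mpr hr.le)
        rwa [inv_smul_smul₀ hr.ne'] at this
    calc r • (x ⊔ y) ≤ r • (r⁻¹ • (r • x ⊔ r • y)) := smul_le_smul_of_nonneg_left h1 hr.le
      _ = r • x ⊔ r • y := smul_inv_smul₀ hr.ne' _
  · exact sup_le (smul_le_smul_of_nonneg_left le_sup_left hr.le)
      (smul_le_smul_of_nonneg_left le_sup_right hr.le)

private lemma posPart_smul' {r : ℝ} (hr : 0 ≤ r) (x : E) : (r • x)⁺ = r • x⁺ := by
  rcases hr.eq_or_lt with h | h
  · simp [← h]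
  · rw [posPart_def, posPart_def, smul_sup' h, smul_zero]

private lemma negPart_smul' {r : ℝ} (hr : 0 ≤ r) (x : E) : (r • x)⁻ = r • x⁻ := by
  rw [← posPart_neg, ← posPart_neg, ← smul_neg, posPart_smul' hr]

/-- Archimedean property of a conditionally complete lattice group. -/
private lemma arch {x y : E} (hx : 0 ≤ x) (h : ∀ n : ℕ, (n : ℝ) • x ≤ y) : x = 0 := by
  set A : Set E := Set.range (fun n : ℕ => (n : ℝ) • x) with hA
  have hne : A.Nonempty := ⟨_, ⟨0, rfl⟩⟩
  have hbdd : BddAbove A := ⟨y, by rintro _ ⟨n, rfl⟩; exact h n⟩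
  have hlub : IsLUB A (sSup A) := isLUB_csSup hne hbdd
  have hub : (sSup A) - x ∈ upperBounds A := by
    rintro _ ⟨n, rfl⟩
    rw [le_sub_iff_add_le]
    have : ((n : ℝ) + 1) • x ≤ sSup A := by
      have := hlub.1 ⟨n + 1, rfl⟩
      push_cast at this
      exact this
    rwa [add_smul, one_smul] at this
  have := hlub.2 hub
  have hx0 : x ≤ 0 := by
    have h' := sub_le_sub_right this (sSup A - x)
    simpa using h'
  exact le_antisymm hx0 hx

private lemma inf_add_le' {a b c : E} (ha : 0 ≤ a) (hb : 0 ≤ b) (hc : 0 ≤ c) :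
    (a + b) ⊓ c ≤ a ⊓ c + b ⊓ c := by
  have e1 : a ⊓ c + b ⊓ c = ((a + b) ⊓ (a + c)) ⊓ ((c + b) ⊓ (c + c)) := by
    have h1 : a ⊓ c + b ⊓ c = (a + b ⊓ c) ⊓ (c + b ⊓ c) := by
      rw [inf_add_right']
    have h2 : a + b ⊓ c = (a + b) ⊓ (a + c) := by
      rw [add_comm a b, add_comm a c, inf_add_right', add_comm]
    have h3 : c + b ⊓ c = (c + b) ⊓ (c + c) := by
      rw [add_comm c b, add_comm c c, inf_add_right', add_comm]
    rw [h1, h2, h3]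
  rw [e1]
  refine le_inf (le_inf inf_le_left ?_) (le_inf ?_ ?_)
  · exact inf_le_right.trans (le_add_of_nonneg_left ha)
  · exact inf_le_right.trans (le_add_of_nonneg_right hb)
  · exact inf_le_right.trans (le_add_of_nonneg_right hc)

private lemma sum_le_sum' {n : ℕ} {f g : ℕ → E} (h : ∀ k, f k ≤ g k) :
    ∑ k ∈ Finset.range n, f k ≤ ∑ k ∈ Finset.range n, g k := by
  induction n with
  | zero => simp
  | succ n ih =>
    rw [Finset.sum_range_succ, Finset.sum_range_succ]
    exact add_le_add ih (h n)

end Aux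

section Px

variable {E : Type*} [ConditionallyCompleteLattice E] [AddCommGroup E]
  [CovariantClass E E (· + ·) (· ≤ ·)] [Module ℝ E] [PosSMulMono ℝ E]

/-- The supremum defining the band projection of `x` onto the band of `g`. -/
private noncomputable def px (g x : E) : E :=
  sSup (Set.range (fun m : ℕ => x ⊓ (m : ℝ) • g))

private lemma px_bdd (g x : E) : BddAbove (Set.range (fun m : ℕ => x ⊓ (m : ℝ) • g)) :=
  ⟨x, by rintro _ ⟨m, rfl⟩; exact inf_le_left⟩

private lemma px_ne (g x : E) : (Set.range (fun m : ℕ => x ⊓ (m : ℝ) • g)).Nonempty :=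
  ⟨_, ⟨0, rfl⟩⟩

private lemma le_px (g x : E) (m : ℕ) : x ⊓ (m : ℝ) • g ≤ px g x :=
  le_csSup (px_bdd g x) ⟨m, rfl⟩

private lemma px_le_of (g x : E) {c : E} (hc : ∀ m : ℕ, x ⊓ (m : ℝ) • g ≤ c) : px g x ≤ c :=
  csSup_le (px_ne g x) (by rintro _ ⟨m, rfl⟩; exact hc m)

private lemma px_le_self (g x : E) : px g x ≤ x :=
  px_le_of g x (fun _ => inf_le_left)

private lemma px_nonneg (g : E) {x : E} (hx : 0 ≤ x) : 0 ≤ px g x := by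
  have h0 : x ⊓ ((0 : ℕ) : ℝ) • g = 0 := by
    rw [Nat.cast_zero, zero_smul]; exact inf_eq_right.mpr hx
  calc (0 : E) = x ⊓ ((0 : ℕ) : ℝ) • g := h0.symm
    _ ≤ px g x := le_px g x 0

private lemma px_zero (g : E) : px g (0 : E) = 0 :=
  le_antisymm (px_le_self g 0) (px_nonneg g le_rfl)

private lemma px_add {g : E} (hg : 0 ≤ g) {x y : E} (hx : 0 ≤ x) (hy : 0 ≤ y) :
    px g (x + y) = px g x + px g y := by
  apply le_antisymm
  · refine px_le_of g _ (fun m => ?_)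
    have hmg : 0 ≤ (m : ℝ) • g := smul_nonneg (Nat.cast_nonneg m) hg
    calc (x + y) ⊓ (m : ℝ) • g ≤ x ⊓ (m : ℝ) • g + y ⊓ (m : ℝ) • g := inf_add_le' hx hy hmg
      _ ≤ px g x + px g y := add_le_add (le_px g x m) (le_px g y m)
  · have key : ∀ m k : ℕ, x ⊓ (m : ℝ) • g + y ⊓ (k : ℝ) • g ≤ px g (x + y) := by
      intro m k
      have h1 : x ⊓ (m : ℝ) • g + y ⊓ (k : ℝ) • g ≤ (x + y) ⊓ ((m + k : ℕ) : ℝ) • g := by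
        refine le_inf (add_le_add inf_le_left inf_le_left) ?_
        have hsc : ((m + k : ℕ) : ℝ) • g = (m : ℝ) • g + (k : ℝ) • g := by
          push_cast; rw [add_smul]
        rw [hsc]
        exact add_le_add inf_le_right inf_le_right
      exact h1.trans (le_px g (x + y) (m + k))
    have step1 : ∀ k : ℕ, px g x ≤ px g (x + y) - y ⊓ (k : ℝ) • g := by
      intro k
      refine px_le_of g x (fun m => ?_)
      rw [le_sub_iff_add_le]
      exact key m k
    have step2 : px g y ≤ px g (x + y) - px g x := by
      refine px_le_of g y (fun k => ?_)
      rw [le_sub_iff_add_le, add_comm, ← le_sub_iff_add_le]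
      exact step1 k
    rw [le_sub_iff_add_le, add_comm] at step2
    exact step2

private lemma px_smul {g : E} (hg : 0 ≤ g) {r : ℝ} (hr : 0 < r) (x : E) :
    px g (r • x) = r • px g x := by
  apply le_antisymm
  · refine px_le_of g _ (fun m => ?_)
    obtain ⟨k, hk⟩ := exists_nat_ge ((m : ℝ) / r)
    have hmk : (m : ℝ) ≤ r * k := by
      rw [div_le_iff₀ hr] at hk; linarith [hk]
    calc (r • x) ⊓ (m : ℝ) • g ≤ (r • x) ⊓ (r * k) • g :=
          inf_le_inf_left _ (scalar_mono hmk hg)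
      _ = r • (x ⊓ (k : ℝ) • g) := by rw [smul_inf' hr, mul_smul]
      _ ≤ r • px g x := smul_le_smul_of_nonneg_left (le_px g x k) hr.le
  · have key : px g x ≤ r⁻¹ • px g (r • x) := by
      refine px_le_of g x (fun m => ?_)
      obtain ⟨k, hk⟩ := exists_nat_ge (r * m)
      have h1 : r • (x ⊓ (m : ℝ) • g) ≤ px g (r • x) := by
        calc r • (x ⊓ (m : ℝ) • g) = (r • x) ⊓ (r * m) • g := by
              rw [smul_inf' hr, mul_smul]
          _ ≤ (r • x) ⊓ (k : ℝ) • g := inf_le_inf_left _ (scalar_mono hk hg)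
          _ ≤ px g (r • x) := le_px g (r • x) k
      have h2 := smul_le_smul_of_nonneg_left h1 (inv_nonneg.mpr hr.le)
      rwa [inv_smul_smul₀ hr.ne'] at h2
    have h3 := smul_le_smul_of_nonneg_left key hr.le
    rwa [smul_inv_smul₀ hr.ne'] at h3

private lemma px_idem (g : E) {x : E} (hx : 0 ≤ x) : px g (px g x) = px g x := by
  apply le_antisymm (px_le_self g _)
  refine px_le_of g x (fun m => ?_)
  have h1 : x ⊓ (m : ℝ) • g ≤ px g x ⊓ (m : ℝ) • g :=
    le_inf (le_px g x m) inf_le_right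
  exact h1.trans (le_px g (px g x) m)

/-- The band projection onto the band generated by `g ≥ 0`, as a linear endomorphism. -/
private noncomputable def bp {g : E} (hg : 0 ≤ g) : Module.End ℝ E where
  toFun x := px g x⁺ - px g x⁻
  map_add' x y := by
    have hdecomp : (x + y)⁺ + (x⁻ + y⁻) = (x + y)⁻ + (x⁺ + y⁺) := by
      have h1 : (x + y)⁺ - (x + y)⁻ = (x⁺ + y⁺) - (x⁻ + y⁻) := by
        rw [posPart_sub_negPart, ← sub_add_sub_comm, posPart_sub_negPart, posPart_sub_negPart]
      rw [sub_eq_sub_iff_add_eq_add] at h1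
      rw [h1, add_comm]
    have key : px g ((x + y)⁺) + (px g x⁻ + px g y⁻)
        = px g ((x + y)⁻) + (px g x⁺ + px g y⁺) := by
      rw [← px_add hg (negPart_nonneg x) (negPart_nonneg y),
        ← px_add hg (posPart_nonneg x) (posPart_nonneg y),
        ← px_add hg (posPart_nonneg (x + y)) (add_nonneg (negPart_nonneg x) (negPart_nonneg y)),
        ← px_add hg (negPart_nonneg (x + y)) (add_nonneg (posPart_nonneg x) (posPart_nonneg y)),
        hdecomp]
    have h2 : px g ((x + y)⁺) - px g ((x + y)⁻)
        = (px g x⁺ + px g y⁺) - (px g x⁻ + px g y⁻) :=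
      sub_eq_sub_iff_add_eq_add.mpr (key.trans (add_comm _ _))
    simpa [sub_add_sub_comm] using h2
  map_smul' r x := by
    simp only [RingHom.id_apply]
    rcases le_or_gt 0 r with hr | hr
    · rw [posPart_smul' hr, negPart_smul' hr]
      rcases hr.eq_or_lt with h | h
      · simp [← h, px_zero]
      · rw [px_smul hg h, px_smul hg h, smul_sub]
    · have hr' : (0 : ℝ) ≤ -r := by linarith
      have h1 : r • x = (-r) • (-x) := by rw [neg_smul, smul_neg, neg_neg]
      rw [h1, posPart_smul' hr', negPart_smul' hr', posPart_neg, negPart_neg]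
      have h : (0 : ℝ) < -r := by linarith
      rw [px_smul hg h, px_smul hg h, ← smul_sub, neg_smul, ← smul_neg, neg_sub]

private lemma bp_apply_nonneg {g : E} (hg : 0 ≤ g) {x : E} (hx : 0 ≤ x) :
    bp hg x = px g x := by
  show px g x⁺ - px g x⁻ = px g x
  rw [posPart_eq_self.mpr hx, negPart_eq_zero.mpr hx, px_zero, sub_zero]

private lemma bp_isBandProjection {g : E} (hg : 0 ≤ g) : IsBandProjection (bp hg) := by
  constructor
  · ext x
    show bp hg (bp hg x) = bp hg x
    have hx : bp hg x = px g x⁺ - px g x⁻ := rfl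
    rw [hx, map_sub, bp_apply_nonneg hg (px_nonneg g (posPart_nonneg x)),
      bp_apply_nonneg hg (px_nonneg g (negPart_nonneg x)),
      px_idem g (posPart_nonneg x), px_idem g (negPart_nonneg x)]
  · intro f hf
    rw [bp_apply_nonneg hg hf]
    exact ⟨px_nonneg g hf, px_le_self g f⟩

end Px
section Core

variable {E : Type*} [ConditionallyCompleteLattice E] [AddCommGroup E]
  [CovariantClass E E (· + ·) (· ≤ ·)] [Module ℝ E] [PosSMulMono ℝ E]

private lemma inf_diff (a c d : E) (hd : 0 ≤ d) : a ⊓ (c + d) - a ⊓ c = (a - c)⁺ ⊓ d := by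
  have hac : a = (a - c) + c := by abel
  have h1 : a ⊓ (c + d) = (a - c) ⊓ d + c := by
    nth_rewrite 1 [hac]
    rw [add_comm c d, inf_add_right']
  have h2 : a ⊓ c = (a - c) ⊓ 0 + c := by
    have h := inf_add_right' (a - c) 0 c
    rw [zero_add, ← hac] at h
    exact h
  have hb0 : (a - c) ⊓ 0 = -((a - c)⁻) := by
    rw [negPart_def, neg_sup, neg_neg, neg_zero]
  have h3 : a ⊓ (c + d) - a ⊓ c = (a - c) ⊓ d + (a - c)⁻ := by
    rw [h1, h2, hb0]; abel
  have hbb : (a - c) + (a - c)⁻ = (a - c)⁺ :=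
    (sub_eq_iff_eq_add.mp (posPart_sub_negPart (a - c))).symm
  have h4 : (a - c) ⊓ d + (a - c)⁻ = (a - c)⁺ ⊓ (d + (a - c)⁻) := by
    rw [← inf_add_right' (a - c) d ((a - c)⁻), hbb]
  have h5 : (a - c)⁺ ⊓ (d + (a - c)⁻) = (a - c)⁺ ⊓ d := by
    apply le_antisymm
    · calc (a - c)⁺ ⊓ (d + (a - c)⁻) = (d + (a - c)⁻) ⊓ (a - c)⁺ := inf_comm _ _
        _ ≤ d ⊓ (a - c)⁺ + (a - c)⁻ ⊓ (a - c)⁺ :=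
            inf_add_le' hd (negPart_nonneg _) (posPart_nonneg _)
        _ = d ⊓ (a - c)⁺ + 0 := by rw [inf_comm ((a - c)⁻), posPart_inf_negPart_eq_zero]
        _ = (a - c)⁺ ⊓ d := by rw [add_zero, inf_comm]
    · exact inf_le_inf_left _ (le_add_of_nonneg_right (negPart_nonneg _))
  rw [h3, h4, h5]

private lemma key_ineq (c d : E) (hd : 0 ≤ d) (r : ℝ) (hr : 0 ≤ r) :
    d ⊓ r • c⁺ ≤ (c + d)⁺ := by
  set w := d ⊓ r • c⁺ with hw
  have hwd : w ≤ d := inf_le_left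
  have h1 : w - (c + d)⁺ ≤ c⁻ := by
    have h2 : c + w ≤ (c + d)⁺ := by
      refine le_trans (add_le_add_right hwd c) ?_
      rw [posPart_def]; exact le_sup_left
    calc w - (c + d)⁺ ≤ w - (c + w) := sub_le_sub_left h2 w
      _ = -c := by abel
      _ ≤ c⁻ := by rw [negPart_def]; exact le_sup_left
  have h3 : w - (c + d)⁺ ≤ r • c⁺ := (sub_le_self _ (posPart_nonneg _)).trans inf_le_right
  have hr'1 : (1 : ℝ) ≤ max r 1 := le_max_right _ _
  have hr'pos : (0 : ℝ) < max r 1 := lt_of_lt_of_le one_pos hr'1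
  have h4 : c⁻ ≤ (max r 1) • c⁻ := by
    have := scalar_mono hr'1 (negPart_nonneg c); rwa [one_smul] at this
  have h5 : r • c⁺ ≤ (max r 1) • c⁺ := scalar_mono (le_max_left _ _) (posPart_nonneg c)
  have h6 : w - (c + d)⁺ ≤ (max r 1) • c⁻ ⊓ (max r 1) • c⁺ := le_inf (h1.trans h4) (h3.trans h5)
  have h7 : (max r 1) • c⁻ ⊓ (max r 1) • c⁺ = 0 := by
    rw [← smul_inf' hr'pos, inf_comm, posPart_inf_negPart_eq_zero, smul_zero]
  rw [h7, sub_nonpos] at h6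
  exact h6

end Core


/-- If `TSPe = TPe` for every band projection `P`, then `TSf = Tf` for all `f`. -/
theorem stmt15 {E : Type*} [ConditionallyCompleteLattice E] [AddCommGroup E]
    [CovariantClass E E (· + ·) (· ≤ ·)] [Module ℝ E] [PosSMulMono ℝ E]
    (e : E) (he : IsWeakOrderUnit e) (T S : Module.End ℝ E)
    (hT : IsConditionalExpectation T) (hTe : T e = e)
    (hS : IsOrderContRieszHom S) (hSe : S e = e)
    (h : ∀ P : Module.End ℝ E, IsBandProjection P → T (S (P e)) = T (P e)) :
    ∀ f : E, T (S f) = T f := by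
  -- basic operator facts
  have hTmono : ∀ {x y : E}, x ≤ y → T x ≤ T y := by
    intro x y hxy
    have := hT.positive (y - x) (sub_nonneg.mpr hxy)
    rw [map_sub] at this
    exact sub_nonneg.mp this
  have hSmono : ∀ {x y : E}, x ≤ y → S x ≤ S y := by
    intro x y hxy
    have h1 : x ⊔ y = y := sup_eq_right.mpr hxy
    have h2 := hS.latticeHom x y
    rw [h1] at h2
    exact le_sup_left.trans h2.ge
  have hSabs : ∀ x : E, S |x| = |S x| := by
    intro x
    have h1 : |x| = x ⊔ -x := rfl
    rw [h1, hS.latticeHom, map_neg]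
    rfl
  have habsT : ∀ x : E, |T x| ≤ T |x| := by
    intro x
    refine abs_le'.mpr ⟨hTmono (le_abs_self x), ?_⟩
    have h1 : -x ≤ |x| := le_sup_right
    have h2 := hTmono h1
    rw [map_neg] at h2
    exact h2
  -- Step A: the core case 0 ≤ f ≤ e
  have core : ∀ {f : E}, 0 ≤ f → f ≤ e → T (S f) = T f := by
    intro f hf0 hfe
    have key : ∀ n : ℕ, 0 < n → |T (S f) - T f| ≤ (n : ℝ)⁻¹ • e + (n : ℝ)⁻¹ • e := by
      intro n hn
      set δ : ℝ := (n : ℝ)⁻¹ with hδdef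
      have hδpos : 0 < δ := inv_pos.mpr (Nat.cast_pos.mpr hn)
      have hδe : (0 : E) ≤ δ • e := smul_nonneg hδpos.le he.1.le
      set g : ℕ → E := fun k => (f - ((k : ℝ) * δ) • e)⁺ with hgdef
      have hg : ∀ k, 0 ≤ g k := fun k => posPart_nonneg _
      set w : ℕ → E := fun k => g k ⊓ δ • e with hwdef
      have hsc : ∀ k : ℕ, (((k + 1 : ℕ) : ℝ) * δ) • e = ((k : ℝ) * δ) • e + δ • e := by
        intro k
        have hr : ((k + 1 : ℕ) : ℝ) * δ = (k : ℝ) * δ + δ := by push_cast; ring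
        rw [hr, add_smul]
      have tele : ∀ k : ℕ,
          f ⊓ (((k + 1 : ℕ) : ℝ) * δ) • e - f ⊓ ((k : ℝ) * δ) • e = w k := by
        intro k
        rw [hsc k, inf_diff f _ _ hδe]
      have hsum : ∑ k ∈ range n, w k = f := by
        have hts := Finset.sum_range_sub (fun k => f ⊓ ((k : ℝ) * δ) • e) n
        calc ∑ k ∈ range n, w k
            = ∑ k ∈ range n,
                (f ⊓ (((k + 1 : ℕ) : ℝ) * δ) • e - f ⊓ ((k : ℝ) * δ) • e) :=
              (Finset.sum_congr rfl (fun k _ => (tele k).symm))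
          _ = f ⊓ ((n : ℝ) * δ) • e - f ⊓ (((0 : ℕ) : ℝ) * δ) • e := hts
          _ = f := by
              rw [hδdef, mul_inv_cancel₀ (Nat.cast_ne_zero.mpr hn.ne'), one_smul,
                inf_eq_left.mpr hfe, Nat.cast_zero, zero_mul, zero_smul,
                inf_eq_right.mpr hf0, sub_zero]
      set Ec : ℕ → E := fun k => px (g k) e with hEdef
      have hupper : ∀ k, w k ≤ δ • Ec k := by
        intro k
        have h1 : w k ≤ (δ • e) ⊓ ((1 : ℕ) : ℝ) • g k := by
          rw [Nat.cast_one, one_smul]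
          exact le_inf inf_le_right inf_le_left
        calc w k ≤ (δ • e) ⊓ ((1 : ℕ) : ℝ) • g k := h1
          _ ≤ px (g k) (δ • e) := le_px _ _ 1
          _ = δ • Ec k := px_smul (hg k) hδpos e
      have hlower : ∀ k, δ • Ec (k + 1) ≤ w k := by
        intro k
        have h0 : δ • Ec (k + 1) = px (g (k + 1)) (δ • e) :=
          (px_smul (hg (k + 1)) hδpos e).symm
        rw [h0]
        refine px_le_of _ _ (fun m => ?_)
        refine le_inf ?_ inf_le_left
        have hki := key_ineq (f - (((k + 1 : ℕ) : ℝ) * δ) • e) (δ • e) hδe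
          (m : ℝ) (Nat.cast_nonneg m)
        have hc : (f - (((k + 1 : ℕ) : ℝ) * δ) • e + δ • e)⁺ = g k := by
          simp only [hgdef]
          congr 1
          rw [hsc k]
          abel
        rw [hc] at hki
        exact hki
      set s : E := ∑ k ∈ range n, δ • Ec (k + 1) with hsdef
      have hsle : s ≤ f := by
        rw [hsdef, ← hsum]
        exact sum_le_sum' (fun k => hlower k)
      have hfs : f - s ≤ δ • e := by
        have h1 : f - s = ∑ k ∈ range n, (w k - δ • Ec (k + 1)) := by
          rw [Finset.sum_sub_distrib, hsum, hsdef]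
        have h2 : ∑ k ∈ range n, (w k - δ • Ec (k + 1))
            ≤ ∑ k ∈ range n, (δ • Ec k - δ • Ec (k + 1)) :=
          sum_le_sum' (fun k => sub_le_sub_right (hupper k) _)
        have h3 : ∑ k ∈ range n, (δ • Ec k - δ • Ec (k + 1)) = δ • Ec 0 - δ • Ec n :=
          Finset.sum_range_sub' (fun k => δ • Ec k) n
        have h4 : δ • Ec 0 - δ • Ec n ≤ δ • e := by
          have h5 : (0 : E) ≤ δ • Ec n :=
            smul_nonneg hδpos.le (px_nonneg _ he.1.le)
          have h6 : δ • Ec 0 ≤ δ • e :=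
            smul_le_smul_of_nonneg_left (px_le_self _ e) hδpos.le
          calc δ • Ec 0 - δ • Ec n ≤ δ • Ec 0 := sub_le_self _ h5
            _ ≤ δ • e := h6
        calc f - s = ∑ k ∈ range n, (w k - δ • Ec (k + 1)) := h1
          _ ≤ ∑ k ∈ range n, (δ • Ec k - δ • Ec (k + 1)) := h2
          _ = δ • Ec 0 - δ • Ec n := h3
          _ ≤ δ • e := h4
      have hTSs : T (S s) = T s := by
        have hbpe : ∀ k, Ec k = bp (hg k) e :=
          fun k => (bp_apply_nonneg (hg k) he.1.le).symm
        rw [hsdef]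
        calc T (S (∑ k ∈ range n, δ • Ec (k + 1)))
            = ∑ k ∈ range n, δ • T (S (Ec (k + 1))) := by
              rw [map_sum, map_sum]
              exact Finset.sum_congr rfl (fun k _ => by rw [map_smul, map_smul])
          _ = ∑ k ∈ range n, δ • T (Ec (k + 1)) := by
              refine Finset.sum_congr rfl (fun k _ => ?_)
              rw [hbpe (k + 1), h _ (bp_isBandProjection _)]
          _ = T (∑ k ∈ range n, δ • Ec (k + 1)) := by
              rw [map_sum]
              exact (Finset.sum_congr rfl (fun k _ => by rw [map_smul])).symm
      have hdiff : T (S f) - T f = T (S (f - s)) - T (f - s) := by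
        rw [map_sub, map_sub, map_sub, hTSs]
        abel
      have habsfs : |f - s| = f - s := abs_of_nonneg (sub_nonneg.mpr hsle)
      have htri : |T (S (f - s)) - T (f - s)| ≤ |T (S (f - s))| + |T (f - s)| := by
        refine abs_le'.mpr ⟨?_, ?_⟩
        · have h1 : T (S (f - s)) ≤ |T (S (f - s))| := le_abs_self _
          have h2 : -(T (f - s)) ≤ |T (f - s)| := le_sup_right
          calc T (S (f - s)) - T (f - s) = T (S (f - s)) + -(T (f - s)) := by abel
            _ ≤ |T (S (f - s))| + |T (f - s)| := add_le_add h1 h2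
        · have h1 : -(T (S (f - s))) ≤ |T (S (f - s))| := le_sup_right
          have h2 : T (f - s) ≤ |T (f - s)| := le_abs_self _
          calc -(T (S (f - s)) - T (f - s)) = -(T (S (f - s))) + T (f - s) := by abel
            _ ≤ |T (S (f - s))| + |T (f - s)| := add_le_add h1 h2
      calc |T (S f) - T f| = |T (S (f - s)) - T (f - s)| := by rw [hdiff]
        _ ≤ |T (S (f - s))| + |T (f - s)| := htri
        _ ≤ T |S (f - s)| + T |f - s| := add_le_add (habsT _) (habsT _)
        _ = T (S |f - s|) + T |f - s| := by rw [hSabs]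
        _ ≤ T (S (δ • e)) + T (δ • e) := by
            have h1 : |f - s| ≤ δ • e := by rw [habsfs]; exact hfs
            exact add_le_add (hTmono (hSmono h1)) (hTmono h1)
        _ = δ • e + δ • e := by
            rw [map_smul, map_smul, hSe, map_smul, hTe]
    have harch : ∀ n : ℕ, (n : ℝ) • |T (S f) - T f| ≤ e + e := by
      intro n
      rcases Nat.eq_zero_or_pos n with rfl | hn
      · simpa using add_nonneg he.1.le he.1.le
      · have h1 := key n hn
        have h2 := smul_le_smul_of_nonneg_left h1 (Nat.cast_nonneg n : (0 : ℝ) ≤ n)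
        have h3 : (n : ℝ) • ((n : ℝ)⁻¹ • e + (n : ℝ)⁻¹ • e) = e + e := by
          rw [smul_add, smul_inv_smul₀ (Nat.cast_ne_zero.mpr hn.ne')]
        rwa [h3] at h2
    have h0 := arch (abs_nonneg _) harch
    have h1 : T (S f) - T f ≤ 0 := (le_abs_self _).trans h0.le
    have h2 : -(T (S f) - T f) ≤ 0 := le_of_le_of_eq (le_sup_right : _ ≤ |T (S f) - T f|) h0
    have h3 : (0 : E) ≤ T (S f) - T f := by simpa using neg_nonpos.mp h2
    exact sub_eq_zero.mp (le_antisymm h1 h3)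
  -- Step B: the case 0 ≤ f ≤ r • e
  have stepB : ∀ {f : E} (r : ℝ), 0 < r → 0 ≤ f → f ≤ r • e → T (S f) = T f := by
    intro f r hr hf0 hfr
    have hf'0 : (0 : E) ≤ r⁻¹ • f := smul_nonneg (inv_nonneg.mpr hr.le) hf0
    have hf'e : r⁻¹ • f ≤ e := by
      have := smul_le_smul_of_nonneg_left hfr (inv_nonneg.mpr hr.le)
      rwa [inv_smul_smul₀ hr.ne'] at this
    have hcore := core hf'0 hf'e
    have hfeq : f = r • (r⁻¹ • f) := (smul_inv_smul₀ hr.ne' f).symm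
    calc T (S f) = T (S (r • (r⁻¹ • f))) := by rw [← hfeq]
      _ = r • T (S (r⁻¹ • f)) := by rw [map_smul, map_smul]
      _ = r • T (r⁻¹ • f) := by rw [hcore]
      _ = T (r • (r⁻¹ • f)) := (map_smul T r (r⁻¹ • f)).symm
      _ = T f := by rw [← hfeq]
  -- Step C: the case 0 ≤ f
  have stepC : ∀ {f : E}, 0 ≤ f → T (S f) = T f := by
    intro f hf0
    set A : Set E := Set.range (fun n : ℕ => f ⊓ (n : ℝ) • e) with hAdef
    have hAne : A.Nonempty := ⟨_, ⟨0, rfl⟩⟩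
    have hAbdd : BddAbove A := ⟨f, by rintro _ ⟨n, rfl⟩; exact inf_le_left⟩
    have hmemnn : ∀ n : ℕ, (0 : E) ≤ f ⊓ (n : ℝ) • e :=
      fun n => le_inf hf0 (smul_nonneg (Nat.cast_nonneg n) he.1.le)
    have hlubA : IsLUB A f := by
      have hlub : IsLUB A (sSup A) := isLUB_csSup hAne hAbdd
      have hg'f : sSup A ≤ f := csSup_le hAne (by rintro _ ⟨n, rfl⟩; exact inf_le_left)
      have hh0 : (0 : E) ≤ (f - sSup A) ⊓ e := le_inf (sub_nonneg.mpr hg'f) he.1.le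
      have claim : ∀ n : ℕ, (n : ℝ) • ((f - sSup A) ⊓ e) ≤ f ⊓ (n : ℝ) • e := by
        intro n
        induction n with
        | zero => simpa using le_inf hf0 (le_of_eq (zero_smul ℝ e).symm)
        | succ n ih =>
          have hcast : ((n + 1 : ℕ) : ℝ) • ((f - sSup A) ⊓ e)
              = (n : ℝ) • ((f - sSup A) ⊓ e) + (f - sSup A) ⊓ e := by
            have hc : ((n + 1 : ℕ) : ℝ) = (n : ℝ) + 1 := by push_cast; ring
            rw [hc, add_smul, one_smul]
          have hub : sSup A ∈ upperBounds A := hlub.1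
          have hge : f ⊓ (n : ℝ) • e ≤ sSup A := hub ⟨n, rfl⟩
          have hstep : (f - sSup A) ⊓ e ≤ (f - f ⊓ (n : ℝ) • e) ⊓ e :=
            inf_le_inf_right _ (sub_le_sub_left hge f)
          have hkey : f ⊓ (n : ℝ) • e + (f - f ⊓ (n : ℝ) • e) ⊓ e
              ≤ f ⊓ ((n + 1 : ℕ) : ℝ) • e := by
            have hid : f ⊓ (n : ℝ) • e + (f - f ⊓ (n : ℝ) • e) ⊓ e
                = f ⊓ (f ⊓ (n : ℝ) • e + e) := by
              have hir := inf_add_right' (f - f ⊓ (n : ℝ) • e) e (f ⊓ (n : ℝ) • e)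
              rw [sub_add_cancel] at hir
              rw [add_comm, ← hir, add_comm]
            rw [hid]
            refine inf_le_inf_left f ?_
            have h1 : f ⊓ (n : ℝ) • e + e ≤ (n : ℝ) • e + e :=
              add_le_add_left inf_le_right e
            have h2 : (n : ℝ) • e + e = ((n + 1 : ℕ) : ℝ) • e := by
              have hc : ((n + 1 : ℕ) : ℝ) = (n : ℝ) + 1 := by push_cast; ring
              rw [hc, add_smul, one_smul]
            rw [← h2]
            exact h1
          calc ((n + 1 : ℕ) : ℝ) • ((f - sSup A) ⊓ e)
              = (n : ℝ) • ((f - sSup A) ⊓ e) + (f - sSup A) ⊓ e := hcast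
            _ ≤ f ⊓ (n : ℝ) • e + (f - f ⊓ (n : ℝ) • e) ⊓ e := add_le_add ih hstep
            _ ≤ f ⊓ ((n + 1 : ℕ) : ℝ) • e := hkey
      have harch : ∀ n : ℕ, (n : ℝ) • ((f - sSup A) ⊓ e) ≤ f :=
        fun n => (claim n).trans inf_le_left
      have hzero : (f - sSup A) ⊓ e = 0 := arch hh0 harch
      have hz2 := he.2 (f - sSup A) (sub_nonneg.mpr hg'f) hzero
      have hfeq : f = sSup A := by
        have := sub_eq_zero.mp hz2
        rw [this]
      rw [hfeq]
      exact hlub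
    have hAdir : DirectedOn (· ≤ ·) A := by
      rintro _ ⟨n, rfl⟩ _ ⟨m, rfl⟩
      refine ⟨f ⊓ ((max n m : ℕ) : ℝ) • e, ⟨max n m, rfl⟩, ?_, ?_⟩
      · exact inf_le_inf_left f (scalar_mono (Nat.cast_le.mpr (le_max_left n m)) he.1.le)
      · exact inf_le_inf_left f (scalar_mono (Nat.cast_le.mpr (le_max_right n m)) he.1.le)
    have hSlub : IsLUB (S '' A) (S f) := hS.orderContinuous A hAne hAdir f hlubA
    have hSdir : DirectedOn (· ≤ ·) (S '' A) := by
      rintro _ ⟨a, ha, rfl⟩ _ ⟨b, hb, rfl⟩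
      obtain ⟨c, hc, hac, hbc⟩ := hAdir a ha b hb
      exact ⟨S c, ⟨c, hc, rfl⟩, hSmono hac, hSmono hbc⟩
    have hT1 : IsLUB (T '' (S '' A)) (T (S f)) :=
      hT.orderContinuous (S '' A) (hAne.image S) hSdir (S f) hSlub
    have hT2 : IsLUB (T '' A) (T f) := hT.orderContinuous A hAne hAdir f hlubA
    have himg : T '' (S '' A) = T '' A := by
      rw [Set.image_image]
      refine Set.image_congr ?_
      rintro _ ⟨n, rfl⟩
      have hn1 : (0 : ℝ) < (n : ℝ) + 1 := by positivity
      refine stepB ((n : ℝ) + 1) hn1 (hmemnn n) ?_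
      refine inf_le_right.trans
        (scalar_mono (by linarith [Nat.cast_nonneg (α := ℝ) n] : (n : ℝ) ≤ (n : ℝ) + 1) he.1.le)
    rw [himg] at hT1
    exact hT1.unique hT2
  -- general case
  intro f
  have hdecomp : f = f⁺ - f⁻ := (posPart_sub_negPart f).symm
  calc T (S f) = T (S (f⁺ - f⁻)) := by rw [← hdecomp]
    _ = T (S f⁺) - T (S f⁻) := by rw [map_sub, map_sub]
    _ = T f⁺ - T f⁻ := by rw [stepC (posPart_nonneg f), stepC (negPart_nonneg f)]
    _ = T (f⁺ - f⁻) := by rw [map_sub]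
    _ = T f := by rw [← hdecomp]
end
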